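/- arXiv:2310.13067 — 3 statements merged into one kernel-verified Lean document; each statement's English description precedes it below -/
import Mathlib

section
/- If there exists an upcycle for {0,...,a−1}^n with diamondicity d, then for every integer k ≥ 1, there exists an upcycle for {0,...,ak−1}^n with diamondicity d. -/
/-- The window of length `n` of the cyclic partial word `u` starting at position `i`
covers the total word `w`. -/
def Covers (a n : ℕ) (u : ℕ → Option (Fin a)) (i : ℕ) (w : Fin n → Fin a) : Prop :=
  ∀ j : Fin n, u (i + (j : ℕ)) = none ∨ u (i + (j : ℕ)) = some (w j)

/-- `u`, viewed as a cyclic partial word of length `N`, is a universal partial cycle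
for `(Fin a)^n`. -/
def IsUpcycle (a n N : ℕ) (u : ℕ → Option (Fin a)) : Prop :=
  (∀ i, u (i + N) = u i) ∧ ∀ w : Fin n → Fin a, ∃! i : Fin N, Covers a n u (i : ℕ) w

set_option linter.unusedSectionVars false


open Equiv Equiv.Perm

variable {α : Type*} [Fintype α] [DecidableEq α]

lemma merge_sc (π : Perm α) (a b : α) (hab : ¬ π.SameCycle a b) :
    (π * Equiv.swap a b).SameCycle a b ∧
      ∀ y, π.SameCycle a y → (π * Equiv.swap a b).SameCycle a y := by
  have hne : a ≠ b := fun h => hab (h ▸ Equiv.Perm.SameCycle.refl π a)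
  set π' := π * Equiv.swap a b with hπ'
  have hπ'a : π' a = π b := by simp [hπ', Equiv.swap_apply_left]
  have hπ'b : π' b = π a := by simp [hπ', Equiv.swap_apply_right]
  have hπ'x : ∀ x, x ≠ a → x ≠ b → π' x = π x := by
    intro x h1 h2; simp [hπ', Equiv.swap_apply_of_ne_of_ne h1 h2]
  -- S2
  have horder : 0 < orderOf π := orderOf_pos π
  have hβ : (π ^ orderOf π) b = b := by rw [pow_orderOf_eq_one]; rfl
  have hex : ∃ i, 0 < i ∧ ((π ^ i) b = a ∨ (π ^ i) b = b) :=
    ⟨orderOf π, horder, Or.inr hβ⟩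
  classical
  let i0 := Nat.find hex
  have hi0 := Nat.find_spec hex
  have hmin := fun j (hj : j < i0) => Nat.find_min hex hj
  have key : ∀ i, 0 < i → i ≤ i0 → (π' ^ i) a = (π ^ i) b := by
    intro i hi hile
    induction i with
    | zero => omega
    | succ i ih =>
      rcases Nat.eq_zero_or_pos i with h0 | hpos
      · subst h0; simpa [pow_succ'] using hπ'a
      · have hlt : i < i0 := by omega
        have hib := ih hpos (le_of_lt hlt)
        have hnotin : ¬ (0 < i ∧ ((π ^ i) b = a ∨ (π ^ i) b = b)) := hmin i hlt
        have h1 : (π ^ i) b ≠ a := fun h => hnotin ⟨hpos, Or.inl h⟩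
        have h2 : (π ^ i) b ≠ b := fun h => hnotin ⟨hpos, Or.inr h⟩
        calc (π' ^ (i+1)) a = π' ((π' ^ i) a) := by
              rw [pow_succ', Equiv.Perm.mul_apply]
        _ = π ((π ^ i) b) := by rw [hib, hπ'x _ h1 h2]
        _ = (π ^ (i+1)) b := by rw [pow_succ', Equiv.Perm.mul_apply]
  have hi0v := key i0 hi0.1 le_rfl
  have hS2 : π'.SameCycle a b := by
    rcases hi0.2 with h | h
    · exfalso; exact hab ⟨-(i0 : ℤ), by rw [← h]; simp [← zpow_natCast]; exact (π ^ (i0 : ℤ)).symm_apply_apply b⟩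
    · exact ⟨(i0 : ℤ), by rw [zpow_natCast, hi0v, h]⟩
  refine ⟨hS2, ?_⟩
  have claim : ∀ i : ℕ, π'.SameCycle a ((π ^ i) a) := by
    intro i
    induction i with
    | zero => exact Equiv.Perm.SameCycle.refl _ _
    | succ i ih =>
      by_cases hA : (π ^ i) a = a
      · have : (π ^ (i+1)) a = π' b := by
          rw [pow_succ', Equiv.Perm.mul_apply, hA, hπ'b]
        rw [this]
        exact hS2.trans ⟨1, by simp⟩
      · by_cases hB : (π ^ i) a = b
        · exact absurd ⟨(i : ℤ), by rw [zpow_natCast, hB]⟩ hab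
        · have : (π ^ (i+1)) a = π' ((π ^ i) a) := by
            rw [hπ'x _ hA hB, pow_succ', Equiv.Perm.mul_apply]
          rw [this]
          exact ih.trans ⟨1, by simp⟩
  intro y hy
  obtain ⟨i, -, -, hiy⟩ := hy.exists_pow_eq π
  exact hiy ▸ claim i


section MergeAux
variable {α : Type*} [Fintype α] [DecidableEq α]

lemma rtg_boundary {R : α → α → Prop} {P : α → Prop} {x y : α}
    (h : Relation.ReflTransGen R x y) (hx : P x) (hy : ¬ P y) :
    ∃ u v, R u v ∧ P u ∧ ¬ P v := by
  induction h with
  | refl => exact absurd hx hy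
  | tail hab r ih =>
    rename_i b c
    by_cases hb : P b
    · exact ⟨b, c, r, hb, hy⟩
    · exact ih hb

lemma exists_single_cycle {V : Type*} [DecidableEq V] (src tgt : α → V)
    (π₀ : Perm α) (hπ₀ : ∀ e, src (π₀ e) = tgt e)
    (conn : ∀ e f : α, Relation.ReflTransGen (fun x y => tgt x = src y) e f)
    (e₀ : α) :
    ∃ π : Perm α, (∀ e, src (π e) = tgt e) ∧ ∀ e, π.SameCycle e₀ e := by
  classical
  set S : Finset (Perm α) := Finset.univ.filter (fun π : Perm α => ∀ e, src (π e) = tgt e)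
    with hS
  have hne : S.Nonempty := ⟨π₀, by simp [hS, hπ₀]⟩
  obtain ⟨π, hπS, hmax⟩ := S.exists_max_image
    (fun π => (Finset.univ.filter (fun e => π.SameCycle e₀ e)).card) hne
  have hcompat : ∀ e, src (π e) = tgt e := by
    simpa [hS] using hπS
  refine ⟨π, hcompat, ?_⟩
  by_contra hnot
  push_neg at hnot
  obtain ⟨f, hf⟩ := hnot
  obtain ⟨x, y, hr, hPx, hPy⟩ := rtg_boundary (P := fun e => π.SameCycle e₀ e)
    (conn e₀ f) (Equiv.Perm.SameCycle.refl _ _) hf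
  have hscby : π.SameCycle (π⁻¹ y) y := ⟨1, by simp⟩
  have hPb : ¬ π.SameCycle e₀ (π⁻¹ y) := fun h => hPy (h.trans hscby)
  have hab : ¬ π.SameCycle x (π⁻¹ y) := fun h => hPb (hPx.trans h)
  have htgtab : tgt x = tgt (π⁻¹ y) := by
    have h1 : src (π (π⁻¹ y)) = tgt (π⁻¹ y) := hcompat (π⁻¹ y)
    rw [show π (π⁻¹ y) = y from π.apply_symm_apply y] at h1
    rw [← h1, ← hr]
  obtain ⟨hS2, hS1⟩ := merge_sc π x (π⁻¹ y) hab
  set π' := π * Equiv.swap x (π⁻¹ y) with hπ'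
  have hcompat' : ∀ e, src (π' e) = tgt e := by
    intro e
    by_cases hea : e = x
    · subst hea
      have h2 : π' e = π (π⁻¹ y) := by simp [hπ', Equiv.swap_apply_left]
      rw [h2, hcompat, htgtab]
    · by_cases heb : e = π⁻¹ y
      · subst heb
        have h2 : π' (π⁻¹ y) = π x := by simp [hπ', Equiv.swap_apply_right]
        rw [h2, hcompat, ← htgtab]
      · have h2 : π' e = π e := by rw [hπ', Equiv.Perm.mul_apply, Equiv.swap_apply_of_ne_of_ne hea heb]
        rw [h2, hcompat]
  have hπ'S : π' ∈ S := by simp [hS, hcompat']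
  have hsub : (Finset.univ.filter (fun e => π.SameCycle e₀ e)) ⊂
      (Finset.univ.filter (fun e => π'.SameCycle e₀ e)) := by
    constructor
    · intro e he
      simp only [Finset.mem_filter, Finset.mem_univ, true_and] at he ⊢
      have : π.SameCycle x e := hPx.symm.trans he
      exact ((hS1 e₀ hPx.symm).symm).trans (hS1 e this)
    · intro hsub'
      have hbmem : (π⁻¹ y) ∈ (Finset.univ.filter (fun e => π'.SameCycle e₀ e)) := by
        simp only [Finset.mem_filter, Finset.mem_univ, true_and]
        exact ((hS1 e₀ hPx.symm).symm).trans hS2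
      have := hsub' hbmem
      simp only [Finset.mem_filter, Finset.mem_univ, true_and] at this
      exact hPb this
  have := hmax π' hπ'S
  have hlt := Finset.card_lt_card hsub
  omega
end MergeAux


open Equiv Equiv.Perm

section Neck
variable {M m k : ℕ}

/-- Edges of the astute graph. -/
abbrev AsE (M m k : ℕ) : Type := ZMod M × (Fin m → Fin k)

variable (M m k) in
def asSrc (e : AsE M m k) : ZMod M × List (Fin k) := (e.1, (List.ofFn e.2).dropLast)

variable (M m k) in
def asTgt (e : AsE M m k) : ZMod M × List (Fin k) := (e.1 + 1, (List.ofFn e.2).tail)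

lemma as_compat_iff (e f : AsE M m k) :
    asTgt M m k e = asSrc M m k f ↔
      (f.1 = e.1 + 1 ∧ ∀ (j : ℕ) (hj : j + 1 < m), f.2 ⟨j, by omega⟩ = e.2 ⟨j + 1, hj⟩) := by
  rw [asTgt, asSrc, Prod.ext_iff]
  constructor
  · rintro ⟨h1, h2⟩
    refine ⟨h1.symm, ?_⟩
    intro j hj
    have h2' : (List.ofFn e.2).tail = (List.ofFn f.2).dropLast := h2
    have hlen1 : j < (List.ofFn e.2).tail.length := by simp; omega
    have hlen2 : j < (List.ofFn f.2).dropLast.length := by simp; omega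
    have hg : (List.ofFn e.2).tail[j] = (List.ofFn f.2).dropLast[j] := by simp only [h2']
    rw [List.getElem_tail, List.getElem_dropLast, List.getElem_ofFn, List.getElem_ofFn] at hg
    exact hg.symm
  · rintro ⟨h1, h2⟩
    refine ⟨h1.symm, ?_⟩
    refine List.ext_getElem (by simp) ?_
    intro j hj1 hj2
    simp only [List.length_tail, List.length_ofFn] at hj1
    rw [List.getElem_tail, List.getElem_dropLast, List.getElem_ofFn, List.getElem_ofFn]
    exact (h2 j (by omega)).symm

variable (M m k) in
/-- one step of the walk, pushing a new symbol. -/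
def asStep (e : AsE M m k) (x : Fin k) : AsE M m k :=
  (e.1 + 1, fun j => if h : (j : ℕ) + 1 < m then e.2 ⟨(j : ℕ) + 1, h⟩ else x)

lemma as_compat_step (e : AsE M m k) (x : Fin k) :
    asTgt M m k e = asSrc M m k (asStep M m k e x) := by
  rw [as_compat_iff]
  refine ⟨rfl, ?_⟩
  intro j hj
  simp only [asStep, dif_pos hj]

variable (M m k) in
def asWalk (e : AsE M m k) (xs : List (Fin k)) : AsE M m k := List.foldl (asStep M m k) e xs

lemma asWalk_rtg (e : AsE M m k) (xs : List (Fin k)) :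
    Relation.ReflTransGen (fun x y => asTgt M m k x = asSrc M m k y) e (asWalk M m k e xs) := by
  induction xs generalizing e with
  | nil => exact Relation.ReflTransGen.refl
  | cons x xs ih =>
    have h1 : asWalk M m k e (x :: xs) = asWalk M m k (asStep M m k e x) xs := rfl
    rw [h1]
    exact Relation.ReflTransGen.head (as_compat_step e x) (ih _)

lemma asWalk_fst (e : AsE M m k) (xs : List (Fin k)) :
    (asWalk M m k e xs).1 = e.1 + (xs.length : ZMod M) := by
  induction xs generalizing e with
  | nil => simp [asWalk]
  | cons x xs ih =>
    have h1 : asWalk M m k e (x :: xs) = asWalk M m k (asStep M m k e x) xs := rfl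
    rw [h1, ih]
    simp only [asStep, List.length_cons]
    push_cast
    ring

lemma asWalk_snd (y₀ : Fin k) (e : AsE M m k) (xs : List (Fin k)) (j : Fin m) :
    (asWalk M m k e xs).2 j = if h : (j : ℕ) + xs.length < m then e.2 ⟨(j : ℕ) + xs.length, h⟩
      else xs.getD ((j : ℕ) + xs.length - m) y₀ := by
  induction xs generalizing e with
  | nil =>
    simp [asWalk]
  | cons x xs ih =>
    have h1 : asWalk M m k e (x :: xs) = asWalk M m k (asStep M m k e x) xs := rfl
    rw [h1, ih]
    simp only [List.length_cons]
    by_cases hlt : (j : ℕ) + (xs.length + 1) < m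
    · rw [dif_pos hlt]
      have hlt2 : (j : ℕ) + xs.length < m := by omega
      rw [dif_pos hlt2]
      simp only [asStep]
      rw [dif_pos (by omega : ((j : ℕ) + xs.length) + 1 < m)]
      simp only [Nat.add_assoc]
    · rw [dif_neg hlt]
      by_cases hlt2 : (j : ℕ) + xs.length < m
      · rw [dif_pos hlt2]
        simp only [asStep]
        have heq : (j : ℕ) + xs.length = m - 1 := by omega
        rw [dif_neg (by omega : ¬ ((j : ℕ) + xs.length) + 1 < m)]
        have : (j : ℕ) + (xs.length + 1) - m = 0 := by omega
        rw [this]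
        rfl
      · rw [dif_neg hlt2]
        have : (j : ℕ) + (xs.length + 1) - m = ((j : ℕ) + xs.length - m) + 1 := by omega
        rw [this, List.getD_cons_succ]

lemma as_conn [NeZero M] (hm : 0 < m) (hk : 0 < k) (e f : AsE M m k) :
    Relation.ReflTransGen (fun x y => asTgt M m k x = asSrc M m k y) e f := by
  set y₀ : Fin k := ⟨0, hk⟩
  set c : ℕ := (f.1 - e.1 - (m : ZMod M)).val with hc
  set xs : List (Fin k) := List.replicate c y₀ ++ List.ofFn f.2 with hxs
  have hres : asWalk M m k e xs = f := by
    have hlen : xs.length = c + m := by simp [hxs]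
    refine Prod.ext ?_ (funext fun j => ?_)
    · rw [asWalk_fst, hlen]
      push_cast
      rw [hc, ZMod.natCast_val, ZMod.cast_id]
      ring
    · rw [asWalk_snd y₀, dif_neg (by omega : ¬ (j : ℕ) + xs.length < m)]
      rw [hlen]
      have hidx : (j : ℕ) + (c + m) - m = c + (j : ℕ) := by omega
      rw [hidx, hxs]
      rw [List.getD_eq_getElem?_getD, List.getElem?_append_right (by simp)]
      simp only [List.length_replicate]
      have : c + (j : ℕ) - c = (j : ℕ) := by omega
      rw [this, List.getElem?_ofFn]
      simp [List.ofFnNthVal, j.isLt]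
  rw [← hres]
  exact asWalk_rtg e xs
end Neck

section Neck2

open Equiv Equiv.Perm

/-- Rotation: an explicit compatible permutation of the astute graph's edges. -/
def asRot (M m k : ℕ) [NeZero m] : Equiv.Perm (AsE M m k) where
  toFun e := (e.1 + 1, fun j => e.2 (j + 1))
  invFun e := (e.1 - 1, fun j => e.2 (j - 1))
  left_inv e := by
    refine Prod.ext (by simp) (funext fun j => ?_)
    simp
  right_inv e := by
    refine Prod.ext (by simp) (funext fun j => ?_)
    simp

lemma as_compat_rot (M m k : ℕ) [NeZero m] (e : AsE M m k) :
    asTgt M m k e = asSrc M m k (asRot M m k e) := by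
  rw [as_compat_iff]
  refine ⟨rfl, ?_⟩
  intro j hj
  have hm2 : 2 ≤ m := by omega
  show e.2 (⟨j, by omega⟩ + 1) = e.2 ⟨j + 1, hj⟩
  have hfin : ((⟨j, by omega⟩ + 1 : Fin m)) = ⟨j + 1, hj⟩ := by
    apply Fin.ext
    rw [Fin.val_add, Fin.val_one']
    have e1 : 1 % m = 1 := Nat.mod_eq_of_lt (by omega)
    show (j + 1 % m) % m = j + 1
    rw [e1]
    exact Nat.mod_eq_of_lt hj
  rw [hfin]

theorem exists_necklace (M m k : ℕ) (hk : 0 < k) (hMm : 0 < M ∨ m = 0) :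
    ∃ B : ℕ → Fin k, (∀ t, B (t + M * k ^ m) = B t) ∧
      ∀ (s : ℕ) (W : Fin m → Fin k), ∃! q : ℕ,
        q < k ^ m ∧ ∀ t : Fin m, B (s + q * M + (t : ℕ)) = W t := by
  classical
  by_cases htriv : k = 1 ∨ m = 0
  · refine ⟨fun _ => ⟨0, hk⟩, fun t => rfl, ?_⟩
    intro s W
    have hpow : k ^ m = 1 := by
      rcases htriv with h | h
      · rw [h, one_pow]
      · rw [h, pow_zero]
    refine ⟨0, ⟨by omega, ?_⟩, ?_⟩
    · intro t
      rcases htriv with h | h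
      · subst h
        exact Subsingleton.elim _ _
      · subst h
        exact t.elim0
    · intro q hq
      omega
  · push_neg at htriv
    obtain ⟨hk1, hm⟩ := htriv
    have hk2 : 2 ≤ k := by omega
    have hm1 : 0 < m := Nat.pos_of_ne_zero hm
    have hM : 0 < M := by
      rcases hMm with h | h
      · exact h
      · omega
    haveI : NeZero M := ⟨hM.ne'⟩
    haveI : NeZero m := ⟨hm⟩
    -- the single-cycle compatible permutation
    set e₀ : AsE M m k := (0, fun _ => ⟨0, hk⟩) with he₀
    obtain ⟨π, hcompat, hsc⟩ := exists_single_cycle (asSrc M m k) (asTgt M m k)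
      (asRot M m k) (fun e => (as_compat_rot M m k e).symm)
      (fun e f => as_conn hm1 hk e f) e₀
    set N : ℕ := M * k ^ m with hN
    have hcardE : Fintype.card (AsE M m k) = N := by
      rw [Fintype.card_prod, ZMod.card, Fintype.card_fun, Fintype.card_fin, Fintype.card_fin]
    have hN2 : 2 ≤ N := by
      have : 2 ≤ k ^ m := by
        calc 2 = 2 ^ 1 := rfl
        _ ≤ k ^ m := Nat.pow_le_pow_left hk2 1 |>.trans (Nat.pow_le_pow_right (by omega) hm1)
      calc 2 ≤ k ^ m := this
      _ = 1 * k ^ m := (one_mul _).symm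
      _ ≤ M * k ^ m := Nat.mul_le_mul_right _ hM
    -- π has no fixed points
    have hnofix : ∀ e, π e ≠ e := by
      intro e he
      have h1 : ∀ z : ℤ, (π ^ z) e = e := fun z => Equiv.Perm.zpow_apply_eq_self_of_apply_eq_self he z
      obtain ⟨f, hf⟩ := Fintype.exists_ne_of_one_lt_card (by omega) e
      obtain ⟨z, hz⟩ := (hsc e).symm.trans (hsc f)
      rw [h1 z] at hz
      exact hf hz.symm
    have hfix0 : π e₀ ≠ e₀ := hnofix e₀
    have hcyc : π.IsCycle := ⟨e₀, hfix0, fun y _ => hsc y⟩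
    have hsupp : π.support = Finset.univ := by
      refine Finset.eq_univ_iff_forall.mpr fun e => Equiv.Perm.mem_support.mpr (hnofix e)
    have hord : orderOf π = N := by
      rw [hcyc.orderOf, hsupp, Finset.card_univ, hcardE]
    have hpowN : π ^ N = 1 := by rw [← hord]; exact pow_orderOf_eq_one π
    -- reduction of exponents
    have hred : ∀ x : ℕ, (π ^ x) e₀ = (π ^ (x % N)) e₀ := by
      intro x
      conv_lhs => rw [← Nat.div_add_mod x N]
      rw [pow_add, pow_mul, hpowN, one_pow, one_mul]
    -- the enumeration map is bijective
    have hsurj : Function.Surjective (fun i : Fin N => (π ^ (i : ℕ)) e₀) := by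
      intro e
      obtain ⟨z, hz⟩ := hsc e
      have h0 : ((N : ℤ)) ≠ 0 := by positivity
      set z' := z % (N : ℤ) with hz'
      have hz'nn : 0 ≤ z' := Int.emod_nonneg z h0
      have hz'lt : z' < N := Int.emod_lt_of_pos z (by positivity)
      refine ⟨⟨z'.toNat, by omega⟩, ?_⟩
      have : π ^ (z'.toNat : ℕ) = π ^ z' := by
        rw [← zpow_natCast, Int.toNat_of_nonneg hz'nn]
      simp only
      rw [this, hz', ← hord, zpow_mod_orderOf, hz]
    have hbij : Function.Bijective (fun i : Fin N => (π ^ (i : ℕ)) e₀) := by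
      rw [Fintype.bijective_iff_surjective_and_card]
      exact ⟨hsurj, by rw [Fintype.card_fin, hcardE]⟩
    have hinj : ∀ x x' : ℕ, (π ^ x) e₀ = (π ^ x') e₀ → x % N = x' % N := by
      intro x x' hxx
      rw [hred x, hred x'] at hxx
      have := hbij.1 (a₁ := ⟨x % N, Nat.mod_lt _ (by omega)⟩)
        (a₂ := ⟨x' % N, Nat.mod_lt _ (by omega)⟩) (by simpa using hxx)
      simpa using congrArg Fin.val this
    -- structure lemmas for words along the cycle
    have hwordstep : ∀ (e : AsE M m k) (j : ℕ) (hj : j + 1 < m),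
        (π e).2 ⟨j, by omega⟩ = e.2 ⟨j + 1, hj⟩ := by
      intro e j hj
      have := (as_compat_iff e (π e)).mp (hcompat e).symm
      exact this.2 j hj
    have hphasestep : ∀ (e : AsE M m k), (π e).1 = e.1 + 1 := by
      intro e
      exact ((as_compat_iff e (π e)).mp (hcompat e).symm).1
    set B : ℕ → Fin k := fun t => ((π ^ t) e₀).2 ⟨0, hm1⟩ with hB
    have hwindow : ∀ (i t : ℕ) (ht : t < m), ((π ^ i) e₀).2 ⟨t, ht⟩ = B (i + t) := by
      intro i t
      induction t generalizing i with
      | zero => intro ht; simp [hB]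
      | succ t ih =>
        intro ht
        have h1 : ((π ^ (i + 1)) e₀).2 ⟨t, by omega⟩ = B ((i + 1) + t) := ih (i + 1) (by omega)
        have h2 : (π ((π ^ i) e₀)).2 ⟨t, by omega⟩ = ((π ^ i) e₀).2 ⟨t + 1, ht⟩ :=
          hwordstep _ t ht
        rw [← Equiv.Perm.mul_apply, ← pow_succ' π i] at h2
        rw [← h2, h1]
        congr 1
        omega
    have hphase : ∀ i : ℕ, ((π ^ i) e₀).1 = e₀.1 + (i : ZMod M) := by
      intro i
      induction i with
      | zero => simp
      | succ i ih =>
        rw [pow_succ', Equiv.Perm.mul_apply, hphasestep, ih]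
        push_cast
        ring
    refine ⟨B, ?_, ?_⟩
    · intro t
      simp only [hB]
      rw [pow_add, hpowN, mul_one]
    · intro s W
      -- the map q ↦ π^(s+qM) e₀ into the fiber over phase e₀.1+s is injective, hence surjective
      have hqinj : ∀ q q' : ℕ, q < k ^ m → q' < k ^ m →
          (π ^ (s + q * M)) e₀ = (π ^ (s + q' * M)) e₀ → q = q' := by
        intro q q' hq hq' heq
        have h1 := hinj _ _ heq
        have h2 : s + q * M ≡ s + q' * M [MOD N] := h1
        have h3 : q * M ≡ q' * M [MOD N] := Nat.ModEq.add_left_cancel' s h2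
        have h4 : M * q ≡ M * q' [MOD M * k ^ m] := by
          rw [Nat.mul_comm M q, Nat.mul_comm M q']
          exact h3
        have h5 : q ≡ q' [MOD k ^ m] := Nat.ModEq.mul_left_cancel' (by omega) h4
        have := h5.eq_of_lt_of_lt hq hq'
        exact this
      have hqphase : ∀ q : ℕ, ((π ^ (s + q * M)) e₀).1 = e₀.1 + (s : ZMod M) := by
        intro q
        rw [hphase]
        push_cast
        rw [ZMod.natCast_self]
        ring
      -- fiber
      set ρ : ZMod M := e₀.1 + (s : ZMod M) with hρ
      have hfibcard : Fintype.card {e : AsE M m k // e.1 = ρ} = k ^ m := by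
        have hequiv : {e : AsE M m k // e.1 = ρ} ≃ (Fin m → Fin k) :=
          { toFun := fun e => e.val.2
            invFun := fun w => ⟨(ρ, w), rfl⟩
            left_inv := by
              rintro ⟨⟨r, w⟩, hr⟩
              simp only at hr
              subst hr
              rfl
            right_inv := fun w => rfl }
        rw [Fintype.card_congr hequiv, Fintype.card_fun, Fintype.card_fin, Fintype.card_fin]
      set ψ : Fin (k ^ m) → {e : AsE M m k // e.1 = ρ} :=
        fun q => ⟨(π ^ (s + (q : ℕ) * M)) e₀, hqphase q⟩ with hψ
      have hψinj : Function.Injective ψ := by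
        intro q q' h
        have := congrArg Subtype.val h
        simp only [hψ] at this
        exact Fin.ext (hqinj _ _ q.isLt q'.isLt this)
      have hψsurj : Function.Surjective ψ := by
        have := (Fintype.bijective_iff_injective_and_card ψ).mpr
          ⟨hψinj, by rw [Fintype.card_fin, hfibcard]⟩
        exact this.2
      obtain ⟨q, hq⟩ := hψsurj ⟨(ρ, W), rfl⟩
      have hqval : (π ^ (s + (q : ℕ) * M)) e₀ = (ρ, W) := congrArg Subtype.val hq
      refine ⟨(q : ℕ), ⟨q.isLt, ?_⟩, ?_⟩
      · intro t
        have := hwindow (s + (q : ℕ) * M) (t : ℕ) t.isLt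
        rw [hqval] at this
        rw [← this]
      · intro q' hq'
        obtain ⟨hq'lt, hq'win⟩ := hq'
        have hq'edge : (π ^ (s + q' * M)) e₀ = (ρ, W) := by
          refine Prod.ext (hqphase q') (funext fun t => ?_)
          have := hwindow (s + q' * M) (t : ℕ) t.isLt
          have h2 : ((π ^ (s + q' * M)) e₀).2 t = B (s + q' * M + (t : ℕ)) := by
            rw [← this]
          rw [h2, hq'win t]
        exact hqinj q' (q : ℕ) hq'lt q.isLt (hq'edge.trans hqval.symm)
end Neck2

section Assembly

variable {a : ℕ} (u : ℕ → Option (Fin a))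

/-- number of non-diamond positions in the window `[x, x+c)`. -/
def diaCnt (x c : ℕ) : ℕ := ((Finset.range c).filter (fun j => u (x + j) ≠ none)).card

lemma diaCnt_zero (x : ℕ) : diaCnt u x 0 = 0 := by simp [diaCnt]

lemma diaCnt_succ (x c : ℕ) :
    diaCnt u x (c + 1) = diaCnt u x c + (if u (x + c) ≠ none then 1 else 0) := by
  unfold diaCnt
  rw [Finset.range_add_one, Finset.filter_insert]
  by_cases h : u (x + c) ≠ none
  · rw [if_pos h, if_pos h, Finset.card_insert_of_notMem (by simp)]
  · rw [if_neg h, if_neg h, Nat.add_zero]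

lemma diaCnt_add (x c e : ℕ) :
    diaCnt u x (c + e) = diaCnt u x c + diaCnt u (x + c) e := by
  induction e with
  | zero => simp [diaCnt_zero]
  | succ e ih =>
    rw [show c + (e + 1) = (c + e) + 1 by omega, diaCnt_succ, ih, diaCnt_succ,
      show x + (c + e) = x + c + e by omega]
    omega

lemma diaCnt_per {L : ℕ} (hper : ∀ y, u (y + L) = u y) (x c : ℕ) :
    diaCnt u (x + L) c = diaCnt u x c := by
  unfold diaCnt
  congr 1
  refine Finset.filter_congr ?_
  intro j _
  rw [show x + L + j = x + j + L by omega, hper]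

lemma diaCnt_window_const {L : ℕ} (hper : ∀ y, u (y + L) = u y) (x : ℕ) :
    diaCnt u x L = diaCnt u 0 L := by
  induction x with
  | zero => rfl
  | succ x ih =>
    have h1 : diaCnt u x (L + 1) = diaCnt u x L + (if u (x + L) ≠ none then 1 else 0) :=
      diaCnt_succ u x L
    have h2 : diaCnt u x (1 + L) = diaCnt u x 1 + diaCnt u (x + 1) L := diaCnt_add u x 1 L
    have h3 : diaCnt u x 1 = (if u x ≠ none then 1 else 0) := by
      rw [show (1 : ℕ) = 0 + 1 by omega, diaCnt_succ, diaCnt_zero]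
      simp
    rw [show L + 1 = 1 + L by omega] at h1
    rw [h1] at h2
    rw [hper x] at h2
    rw [h3] at h2
    omega

lemma diaCnt_mul {L Mc : ℕ} (hper : ∀ y, u (y + L) = u y)
    (hM : diaCnt u 0 L = Mc) (x q : ℕ) : diaCnt u x (q * L) = q * Mc := by
  induction q with
  | zero => simp [diaCnt_zero]
  | succ q ih =>
    rw [show (q + 1) * L = q * L + L by ring, diaCnt_add, ih,
      diaCnt_window_const u hper, hM]
    ring

end Assembly

/-- If there exists an upcycle for `{0,…,a-1}^n` with diamondicity `d` (length
`a ^ (n-d)`, exactly `d` diamonds per `n`-window), then for every `k ≥ 1` there exists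
an upcycle for `{0,…,ak-1}^n` with diamondicity `d`. -/
theorem upcycle_alphabet_multiple (a n d k : ℕ) (ha : 2 ≤ a) (hn : 0 < n) (hd : d ≤ n)
    (hk : 1 ≤ k)
    (u : ℕ → Option (Fin a))
    (hu : IsUpcycle a n (a ^ (n - d)) u)
    (hdiam : ∀ i, ((Finset.range n).filter (fun j => u (i + j) = none)).card = d) :
    ∃ w : ℕ → Option (Fin (a * k)),
      IsUpcycle (a * k) n ((a * k) ^ (n - d)) w ∧
      ∀ i, ((Finset.range n).filter (fun j => w (i + j) = none)).card = d := by
  classical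
  obtain ⟨huper, hucov⟩ := hu
  set m := n - d with hm
  set L := a ^ m with hL
  set T := k ^ m with hT
  have hLpos : 0 < L := pow_pos (by omega) _
  have hTpos : 0 < T := pow_pos (by omega) _
  -- every n-window contains exactly m non-diamonds
  have hwin : ∀ x, diaCnt u x n = m := by
    intro x
    have h1 := Finset.card_filter_add_card_filter_not
      (s := Finset.range n) (p := fun j => u (x + j) = none)
    simp only [Finset.card_range] at h1
    have h2 := hdiam x
    unfold diaCnt
    simp only [ne_eq]
    omega
  have huperc : ∀ x c, u (x + c * L) = u x := by
    intro x c
    induction c with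
    | zero => simp
    | succ c ih => rw [show x + (c+1)*L = (x + c*L) + L by ring, huper, ih]
  set Mc := diaCnt u 0 L with hMc
  have hMcpos : 0 < Mc ∨ m = 0 := by
    rcases Nat.eq_zero_or_pos m with h | h
    · right; exact h
    · left
      have h1 : 0 < diaCnt u 0 n := by rw [hwin 0]; exact h
      obtain ⟨j, hj⟩ := Finset.card_pos.mp h1
      rw [Finset.mem_filter, Finset.mem_range] at hj
      have hjne : u j ≠ none := by simpa using hj.2
      have hjmod : u (j % L) ≠ none := by
        have h3 : u (j % L + (j / L) * L) = u (j % L) := huperc (j % L) (j / L)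
        rw [show j % L + j / L * L = j from Nat.mod_add_div' j L] at h3
        rw [← h3]
        exact hjne
      refine Finset.card_pos.mpr ⟨j % L, Finset.mem_filter.mpr
        ⟨Finset.mem_range.mpr (Nat.mod_lt _ hLpos), by simpa using hjmod⟩⟩
  have hσadd : ∀ x c, diaCnt u 0 (x + c) = diaCnt u 0 x + diaCnt u x c := by
    intro x c
    have h := diaCnt_add u 0 x c
    simpa using h
  obtain ⟨B, hBper, hBwin⟩ := exists_necklace Mc m k (by omega) hMcpos
  set σ : ℕ → ℕ := fun x => diaCnt u 0 x with hσ
  have hσshift : ∀ x q, σ (x + q * L) = σ x + q * Mc := by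
    intro x q
    simp only [hσ]
    rw [hσadd x (q * L), diaCnt_mul u huper hMc.symm]
  set wf : ℕ → Option (Fin (a * k)) :=
    fun i => (u i).map (fun x => finProdFinEquiv (x, B (σ i))) with hwf
  have hwfnone : ∀ i, wf i = none ↔ u i = none := by
    intro i
    simp [hwf]
  have hmulpow : (a * k) ^ m = L * T := by rw [hL, hT, mul_pow]
  have hwfper : ∀ i, wf (i + (a * k) ^ m) = wf i := by
    intro i
    have h1 : u (i + L * T) = u i := by
      rw [show i + L * T = i + T * L by ring]
      exact huperc i T
    have h2 : σ (i + L * T) = σ i + T * Mc := by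
      rw [show i + L * T = i + T * L by ring]
      exact hσshift i T
    simp only [hwf, hmulpow, h1, h2]
    rw [show σ i + T * Mc = σ i + Mc * T by ring]
    rw [hT, hBper (σ i)]
  have hwfdiam : ∀ i, ((Finset.range n).filter (fun j => wf (i + j) = none)).card = d := by
    intro i
    rw [← hdiam i]
    congr 1
    refine Finset.filter_congr ?_
    intro j _
    simp only [hwfnone]
  refine ⟨wf, ⟨hwfper, ?_⟩, hwfdiam⟩
  intro v
  set v1 : Fin n → Fin a := fun j => (finProdFinEquiv.symm (v j)).1 with hv1
  set v2 : Fin n → Fin k := fun j => (finProdFinEquiv.symm (v j)).2 with hv2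
  have hv12 : ∀ j, finProdFinEquiv (v1 j, v2 j) = v j := by
    intro j
    show finProdFinEquiv ((finProdFinEquiv.symm (v j)).1, (finProdFinEquiv.symm (v j)).2) = v j
    rw [Prod.mk.eta]
    exact finProdFinEquiv.apply_symm_apply (v j)
  obtain ⟨r0, hr0, hr0u⟩ := hucov v1
  set r : ℕ := (r0 : ℕ) with hr
  have hrL : r < L := r0.isLt
  set S : Finset ℕ := (Finset.range n).filter (fun j => u (r + j) ≠ none) with hS
  have hcardS : S.card = m := hwin r
  have hcntlt : ∀ j ∈ S, diaCnt u r j < m := by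
    intro j hj
    rw [hS, Finset.mem_filter, Finset.mem_range] at hj
    obtain ⟨hjn, hjne⟩ := hj
    have h1 : diaCnt u r n = diaCnt u r (j + 1) + diaCnt u (r + (j+1)) (n - (j+1)) := by
      rw [← diaCnt_add u r (j+1) (n - (j+1)), show j + 1 + (n - (j+1)) = n by omega]
    have h2 : diaCnt u r (j + 1) = diaCnt u r j + 1 := by
      rw [diaCnt_succ, if_pos hjne]
    have h3 := hwin r
    omega
  have hcntmono : ∀ j ∈ S, ∀ j', j < j' → diaCnt u r j < diaCnt u r j' := by
    intro j hj j' hjj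
    rw [hS, Finset.mem_filter, Finset.mem_range] at hj
    have h1 : diaCnt u r j' = diaCnt u r (j + 1) + diaCnt u (r + (j+1)) (j' - (j+1)) := by
      rw [← diaCnt_add u r (j+1) (j' - (j+1)), show j + 1 + (j' - (j+1)) = j' by omega]
    have h2 : diaCnt u r (j + 1) = diaCnt u r j + 1 := by
      rw [diaCnt_succ, if_pos hj.2]
    omega
  have hcntinj : ∀ j ∈ S, ∀ j' ∈ S, diaCnt u r j = diaCnt u r j' → j = j' := by
    intro j hj j' hj' he
    rcases lt_trichotomy j j' with h | h | h
    · exact absurd he (by have := hcntmono j hj j' h; omega)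
    · exact h
    · exact absurd he (by have := hcntmono j' hj' j h; omega)
  have himg : S.image (fun j => diaCnt u r j) = Finset.range m := by
    apply Finset.eq_of_subset_of_card_le
    · intro t ht
      obtain ⟨j, hjS, hjt⟩ := Finset.mem_image.mp ht
      exact Finset.mem_range.mpr (hjt ▸ hcntlt j hjS)
    · rw [Finset.card_range, Finset.card_image_of_injOn (fun x hx y hy => hcntinj x hx y hy),
        hcardS]
  have hJex : ∀ t : Fin m, ∃ j, j ∈ S ∧ diaCnt u r j = (t : ℕ) := by
    intro t
    have h1 : (t : ℕ) ∈ S.image (fun j => diaCnt u r j) := by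
      rw [himg]
      exact Finset.mem_range.mpr t.isLt
    simpa [Finset.mem_image] using h1
  choose J hJS hJc using hJex
  have hJlt : ∀ t, J t < n := fun t => Finset.mem_range.mp (Finset.mem_filter.mp (hJS t)).1
  set W : Fin m → Fin k := fun t => v2 ⟨J t, hJlt t⟩ with hW
  obtain ⟨q, ⟨hqlt, hqwin⟩, hquniq⟩ := hBwin (σ r) W
  have hiLT : r + q * L < L * T := by
    calc r + q * L < L + q * L := by omega
    _ = (q + 1) * L := by ring
    _ ≤ T * L := Nat.mul_le_mul_right L (by omega)
    _ = L * T := by ring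
  have hcov : Covers (a * k) n wf (r + q * L) v := by
    intro j
    rcases hempty : u (r + q * L + (j : ℕ)) with _ | x
    · exact Or.inl ((hwfnone _).mpr hempty)
    · right
      have hshift : r + q * L + (j : ℕ) = (r + (j : ℕ)) + q * L := by ring
      have hur : u (r + (j : ℕ)) = some x := by
        rw [← huperc (r + (j : ℕ)) q, ← hshift, hempty]
      have hx : x = v1 j := by
        rcases hr0 j with h | h
        · rw [hur] at h
          exact absurd h (by simp)
        · rw [hur] at h
          exact Option.some.inj h
      have hjS : (j : ℕ) ∈ S := Finset.mem_filter.mpr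
        ⟨Finset.mem_range.mpr j.isLt, by rw [hur]; simp⟩
      have hct : diaCnt u r (j : ℕ) < m := hcntlt _ hjS
      have hσval : σ (r + q * L + (j : ℕ)) = σ r + q * Mc + diaCnt u r (j : ℕ) := by
        rw [hshift, hσshift (r + (j : ℕ)) q]
        simp only [hσ]
        rw [hσadd r (j : ℕ)]
        ring
      have hBval : B (σ r + q * Mc + diaCnt u r (j : ℕ)) = v2 j := by
        have h1 := hqwin ⟨diaCnt u r (j : ℕ), hct⟩
        rw [h1]
        have hJj : J ⟨diaCnt u r (j : ℕ), hct⟩ = (j : ℕ) := by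
          apply hcntinj _ (hJS _) _ hjS
          rw [hJc]
        simp only [hW]
        congr 1
        exact Fin.ext hJj
      show wf (r + q * L + (j : ℕ)) = some (v j)
      simp only [hwf, hempty, Option.map_some]
      rw [hσval, hBval, hx, hv12 j]
  refine ⟨⟨r + q * L, by rw [hmulpow]; exact hiLT⟩, hcov, ?_⟩
  intro y hy
  set yv := (y : ℕ) with hyv
  have hyLT : yv < L * T := by
    rw [← hmulpow]
    exact y.isLt
  set r' := yv % L with hr'
  set q' := yv / L with hq'
  have hy2 : yv = r' + q' * L := by
    rw [hr', hq', Nat.mul_comm]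
    exact (Nat.mod_add_div yv L).symm
  have hq'T : q' < T := by
    rw [hq']
    rw [Nat.div_lt_iff_lt_mul hLpos]
    calc yv < L * T := hyLT
    _ = T * L := by ring
  have hr'L : r' < L := Nat.mod_lt _ hLpos
  have hcov1 : Covers a n u r' v1 := by
    intro j
    have hshift : yv + (j : ℕ) = (r' + (j : ℕ)) + q' * L := by rw [hy2]; ring
    have hper2 : u (yv + (j : ℕ)) = u (r' + (j : ℕ)) := by rw [hshift, huperc]
    rcases hy j with h | h
    · left
      rw [hwfnone] at h
      rw [← hper2]
      exact h
    · rcases hUx : u (yv + (j : ℕ)) with _ | x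
      · left
        rw [← hper2]
        exact hUx
      · right
        have hxv : finProdFinEquiv (x, B (σ (yv + (j : ℕ)))) = v j := by
          have h2 := h
          simp only [hwf, hUx, Option.map_some] at h2
          exact Option.some.inj h2
        have hx1 : x = v1 j := by
          have h3 := congrArg (fun z => (finProdFinEquiv.symm z).1) hxv
          simpa [hv1] using h3
        rw [← hper2, hUx, hx1]
  have hreq : r' = r := by
    have h1 := hr0u ⟨r', hr'L⟩ hcov1
    have h2 := congrArg Fin.val h1
    simpa [hr] using h2
  have hq'win : ∀ t : Fin m, B (σ r + q' * Mc + (t : ℕ)) = W t := by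
    intro t
    have hjS := hJS t
    have hjlt := hJlt t
    have hund : u (r + J t) ≠ none := by
      have := (Finset.mem_filter.mp hjS).2
      simpa using this
    have hshift : yv + J t = (r + J t) + q' * L := by rw [hy2, hreq]; ring
    have hper2 : u (yv + J t) = u (r + J t) := by rw [hshift, huperc]
    have hy_at := hy ⟨J t, hjlt⟩
    rcases hy_at with h | h
    · exfalso
      rw [hwfnone] at h
      exact hund (by rw [← hper2]; exact h)
    · rcases hUx : u (yv + J t) with _ | x
      · exact absurd hUx (by rw [hper2]; exact hund)
      · have hxv : finProdFinEquiv (x, B (σ (yv + J t))) = v ⟨J t, hjlt⟩ := by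
          have h2 := h
          simp only [hwf, hUx, Option.map_some] at h2
          exact Option.some.inj h2
        have hx2 : B (σ (yv + J t)) = v2 ⟨J t, hjlt⟩ := by
          have h3 := congrArg (fun z => (finProdFinEquiv.symm z).2) hxv
          simpa [hv2] using h3
        have hσv : σ (yv + J t) = σ r + q' * Mc + (t : ℕ) := by
          rw [hshift, hσshift (r + J t) q']
          simp only [hσ]
          rw [hσadd r (J t), hJc t]
          ring
        rw [← hσv, hx2]
  have hqq : q' = q := hquniq q' ⟨hq'T, hq'win⟩
  apply Fin.ext
  show yv = r + q * L
  rw [hy2, hreq, hqq]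
end

section
/- Let u be an upcycle for A^n with diamondicity d. Select an n-periodic subset of the diamonds of u, with δ selected diamonds per window. Let w be obtained from u^(a^δ) by replacing all copies of the selected diamonds, in order, with the characters of a cyclic total word v. Then w is an upcycle for A^n if and only if v is an (a, δ, δ·a^{n−d}/n)-perfect necklace; and in that case w has diamondicity d − δ. -/
/-- `v`, viewed as a cyclic word of length `t * a ^ n`, is an `(a, n, t)`-perfect
necklace. -/
def IsPerfectNecklace (a n t : ℕ) (v : ℕ → Fin a) : Prop :=
  (∀ i, v (i + t * a ^ n) = v i) ∧
  ∀ j : Fin t, ∀ w : Fin n → Fin a,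
    ∃! i : Fin (t * a ^ n), (i : ℕ) % t = (j : ℕ) ∧
      ∀ m : Fin n, v ((i : ℕ) + (m : ℕ)) = w m

namespace LiftAux

variable {S : ℕ → Prop} [DecidablePred S]

def cnt (S : ℕ → Prop) [DecidablePred S] (i : ℕ) : ℕ := ((Finset.range i).filter S).card

lemma cnt_zero : cnt S 0 = 0 := by simp [cnt]

lemma cnt_succ (i : ℕ) : cnt S (i + 1) = cnt S i + if S i then 1 else 0 := by
  simp only [cnt, Finset.range_add_one, Finset.filter_insert]
  split
  · rw [Finset.card_insert_of_notMem (by simp)]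
  · simp

lemma cnt_mono : Monotone (cnt S) := fun i j h =>
  Finset.card_le_card (Finset.filter_subset_filter _ (Finset.range_subset_range.2 h))

lemma cnt_add_count (i k : ℕ) :
    cnt S (i + k) = cnt S i + ((Finset.range k).filter (fun j => S (i + j))).card := by
  induction k with
  | zero => simp
  | succ k ih =>
    rw [← Nat.add_assoc, cnt_succ, ih, Finset.range_add_one, Finset.filter_insert]
    split
    · rw [Finset.card_insert_of_notMem (by simp)]; omega
    · omega

lemma cnt_period (P : ℕ) (hP : ∀ i, S (i + P) ↔ S i) (i : ℕ) :
    cnt S (i + P) = cnt S i + cnt S P := by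
  induction i with
  | zero => simp [cnt_zero]
  | succ i ih =>
    have h1 : i + 1 + P = (i + P) + 1 := by omega
    rw [h1, cnt_succ, ih, cnt_succ]
    simp only [hP i]
    omega

lemma cnt_mul_period (P : ℕ) (hP : ∀ i, S (i + P) ↔ S i) (i k : ℕ) :
    cnt S (i + k * P) = cnt S i + k * cnt S P := by
  induction k with
  | zero => simp
  | succ k ih =>
    rw [show i + (k + 1) * P = (i + k * P) + P by ring, cnt_period P hP, ih]
    ring

lemma S_mul_period (P : ℕ) (hP : ∀ i, S (i + P) ↔ S i) (k i : ℕ) :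
    S (i + k * P) ↔ S i := by
  induction k with
  | zero => simp
  | succ k ih =>
    rw [show i + (k + 1) * P = (i + k * P) + P by ring, hP, ih]

lemma cnt_strict {p q : ℕ} (hp : S p) (hpq : p < q) : cnt S p < cnt S q := by
  have h1 : cnt S (p + 1) = cnt S p + 1 := by rw [cnt_succ]; simp [hp]
  have h2 := cnt_mono (S := S) (show p + 1 ≤ q from hpq)
  omega

lemma cnt_jump {m b e : ℕ} (h1 : cnt S b ≤ m) (h2 : m < cnt S e) :
    ∃ p, b ≤ p ∧ p < e ∧ S p ∧ cnt S p = m := by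
  induction e with
  | zero => simp [cnt_zero] at h2
  | succ e ih =>
    by_cases h : m < cnt S e
    · obtain ⟨p, hp1, hp2, hp3, hp4⟩ := ih h
      exact ⟨p, hp1, by omega, hp3, hp4⟩
    · have hce := cnt_succ (S := S) e
      by_cases hSe : S e
      · simp only [hSe, if_true] at hce
        have hbe : b ≤ e := by
          by_contra hbe
          have := cnt_mono (S := S) (show e + 1 ≤ b by omega)
          omega
        exact ⟨e, hbe, by omega, hSe, by omega⟩
      · simp only [hSe, if_false] at hce; omega

lemma fn_mul_period {α : Type*} (u : ℕ → α) {L : ℕ} (hL : ∀ i, u (i + L) = u i) (k i : ℕ) :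
    u (i + k * L) = u i := by
  induction k with
  | zero => simp
  | succ k ih =>
    rw [show i + (k + 1) * L = (i + k * L) + L by ring, hL, ih]

lemma covers_shift {a n L : ℕ} {u : ℕ → Option (Fin a)} (hL : ∀ i, u (i + L) = u i)
    (k i : ℕ) (x : Fin n → Fin a) :
    Covers a n u (i + k * L) x ↔ Covers a n u i x := by
  unfold Covers
  refine forall_congr' fun j => ?_
  rw [show i + k * L + (j : ℕ) = (i + (j : ℕ)) + k * L by ring, fn_mul_period u hL]

lemma P_add_mul {K : ℕ} (P : ℕ → Prop) (hP : ∀ x, P (x + K) ↔ P x) (q y : ℕ) :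
    P (y + q * K) ↔ P y := by
  induction q with
  | zero => simp
  | succ q ih =>
    rw [show y + (q + 1) * K = (y + q * K) + K by ring, hP, ih]

lemma P_mod {K : ℕ} (P : ℕ → Prop) (hP : ∀ x, P (x + K) ↔ P x) (x : ℕ) :
    P x ↔ P (x % K) := by
  conv_lhs => rw [← Nat.mod_add_div' x K]
  exact P_add_mul P hP _ _

lemma existsUnique_fin_shift {K : ℕ} (hK : 0 < K) (P : ℕ → Prop)
    (hP : ∀ x, P (x + K) ↔ P x) (e : ℕ) :
    (∃! k : Fin K, P ((k : ℕ) + e)) ↔ ∃! k : Fin K, P (k : ℕ) := by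
  haveI : NeZero K := ⟨hK.ne'⟩
  refine (Equiv.existsUnique_congr (Equiv.addRight (Fin.ofNat K e)) fun k => ?_)
  have hval : (((Equiv.addRight (Fin.ofNat K e)) k : Fin K) : ℕ) = ((k : ℕ) + e % K) % K := by
    simp [Equiv.addRight, Fin.add_def, Fin.ofNat]
  rw [hval, ← P_mod P hP,
    show (k : ℕ) + e = ((k : ℕ) + e % K) + (e / K) * K by
      rw [Nat.add_assoc, Nat.mod_add_div']]
  exact P_add_mul P hP _ _


variable {a n δ : ℕ} {S : ℕ → Prop} [DecidablePred S] {u : ℕ → Option (Fin a)} {v : ℕ → Fin a}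

lemma covw (hSdiam : ∀ i, S i → u i = none) (i : ℕ) (x : Fin n → Fin a) :
    Covers a n (fun i => if S i then some (v (cnt S i)) else u i) i x ↔
      (Covers a n u i x ∧ ∀ j : Fin n, S (i + (j : ℕ)) → v (cnt S (i + (j : ℕ))) = x j) := by
  constructor
  · intro h
    constructor
    · intro j
      rcases h j with h' | h'
      · by_cases hS : S (i + (j : ℕ))
        · simp [hS] at h'
        · left; simpa [hS] using h'
      · by_cases hS : S (i + (j : ℕ))
        · left; exact hSdiam _ hS
        · right; simpa [hS] using h'
    · intro j hS
      have h' := h j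
      simpa [hS] using h'
  · rintro ⟨h1, h2⟩ j
    by_cases hS : S (i + (j : ℕ))
    · right; simp [hS, h2 j hS]
    · rcases h1 j with h' | h'
      · left; simpa [hS] using h'
      · right; simpa [hS] using h'

lemma key1 (hδwin : ∀ i, cnt S (i + n) = cnt S i + δ) {i j : ℕ} (hj : j < n)
    (hS : S (i + j)) : cnt S i ≤ cnt S (i + j) ∧ cnt S (i + j) < cnt S i + δ := by
  refine ⟨cnt_mono (Nat.le_add_right _ _), ?_⟩
  have h1 := cnt_strict (S := S) hS (show i + j < i + n by omega)
  have h2 := hδwin i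
  omega

lemma key2 (hδwin : ∀ i, cnt S (i + n) = cnt S i + δ) (i m : ℕ) (hm : m < δ) :
    ∃ j, j < n ∧ S (i + j) ∧ cnt S (i + j) = cnt S i + m := by
  obtain ⟨p, hp1, hp2, hp3, hp4⟩ := cnt_jump (S := S) (m := cnt S i + m) (b := i) (e := i + n)
    (by omega) (by rw [hδwin]; omega)
  exact ⟨p - i, by omega, by rwa [show i + (p - i) = p by omega],
    by rwa [show i + (p - i) = p by omega]⟩

lemma key3 {i j j' : ℕ} (hSj : S (i + j)) (hSj' : S (i + j'))
    (h : cnt S (i + j) = cnt S (i + j')) : j = j' := by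
  rcases Nat.lt_trichotomy j j' with hlt | heq | hlt
  · have := cnt_strict (S := S) hSj (show i + j < i + j' by omega); omega
  · exact heq
  · have := cnt_strict (S := S) hSj' (show i + j' < i + j by omega); omega

lemma bridge (hδwin : ∀ i, cnt S (i + n) = cnt S i + δ) (t k i : ℕ)
    (x : Fin n → Fin a) (y : Fin δ → Fin a)
    (compat : ∀ (j : Fin n) (m : Fin δ), S (i + (j : ℕ)) →
      cnt S (i + (j : ℕ)) = cnt S i + (m : ℕ) → x j = y m) :
    ((∀ j : Fin n, S (i + (j : ℕ)) → v (cnt S (i + (j : ℕ)) + k * t) = x j) ↔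
      ∀ m : Fin δ, v (cnt S i + k * t + (m : ℕ)) = y m) := by
  constructor
  · intro h m
    obtain ⟨j, hjn, hjS, hjc⟩ := key2 hδwin i (m : ℕ) m.2
    have hx := h ⟨j, hjn⟩ hjS
    rw [compat ⟨j, hjn⟩ m hjS hjc] at hx
    simp only [Fin.val_mk] at hx
    rw [← hx]
    congr 1
    omega
  · intro h j hjS
    have h1 := key1 hδwin j.2 hjS
    have hm : cnt S (i + (j : ℕ)) - cnt S i < δ := by omega
    have hjc : cnt S (i + (j : ℕ)) = cnt S i + ((⟨_, hm⟩ : Fin δ) : ℕ) := by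
      simp; omega
    rw [compat j ⟨_, hm⟩ hjS hjc, ← h ⟨_, hm⟩]
    congr 1
    simp
    omega

lemma ceq (hSdiam : ∀ i, S i → u i = none)
    (hδwin : ∀ i, cnt S (i + n) = cnt S i + δ) {L t : ℕ}
    (huper : ∀ i, u (i + L) = u i) (hSL : ∀ i, S (i + L) ↔ S i) (hcntL : cnt S L = t)
    (i₀ k : ℕ) (x : Fin n → Fin a) (y : Fin δ → Fin a)
    (compat : ∀ (j : Fin n) (m : Fin δ), S (i₀ + (j : ℕ)) →
      cnt S (i₀ + (j : ℕ)) = cnt S i₀ + (m : ℕ) → x j = y m)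
    (hcov : Covers a n u i₀ x) :
    (Covers a n (fun i => if S i then some (v (cnt S i)) else u i) (i₀ + k * L) x ↔
      ∀ m : Fin δ, v (cnt S i₀ + k * t + (m : ℕ)) = y m) := by
  have h1 : Covers a n u (i₀ + k * L) x := (covers_shift huper k i₀ x).2 hcov
  have h2 : (∀ j : Fin n, S ((i₀ + k * L) + (j : ℕ)) →
      v (cnt S ((i₀ + k * L) + (j : ℕ))) = x j) ↔
      (∀ j : Fin n, S (i₀ + (j : ℕ)) → v (cnt S (i₀ + (j : ℕ)) + k * t) = x j) := by
    refine forall_congr' fun j => ?_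
    rw [show i₀ + k * L + (j : ℕ) = (i₀ + (j : ℕ)) + k * L by ring,
      S_mul_period L hSL, cnt_mul_period L hSL, hcntL]
  exact (covw hSdiam _ x).trans ((and_iff_right h1).trans
    (h2.trans (bridge hδwin t k i₀ x y compat)))


variable {a n d δ : ℕ} {S : ℕ → Prop} [DecidablePred S] {u : ℕ → Option (Fin a)} {v : ℕ → Fin a}

lemma hkn_lemma (hδwin : ∀ i, cnt S (i + n) = cnt S i + δ) :
    ∀ k, cnt S (k * n) = k * δ := by
  intro k
  induction k with
  | zero => simp [cnt_zero]
  | succ k ih => rw [show (k + 1) * n = k * n + n by ring, hδwin, ih]; ring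

lemma hkL_lemma {L : ℕ} (hSL : ∀ i, S (i + L) ↔ S i) :
    ∀ k, cnt S (k * L) = k * cnt S L := by
  intro k
  have := cnt_mul_period (S := S) L hSL 0 k
  simpa [cnt_zero] using this

lemma nt_eq {L : ℕ} (hSL : ∀ i, S (i + L) ↔ S i)
    (hδwin : ∀ i, cnt S (i + n) = cnt S i + δ) : n * cnt S L = L * δ := by
  calc n * cnt S L = cnt S (n * L) := (hkL_lemma hSL n).symm
    _ = cnt S (L * n) := by rw [mul_comm]
    _ = L * δ := hkn_lemma hδwin L

lemma forward (ha : 2 ≤ a) (hn : 0 < n) (hδ : 0 < δ)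
    (hu : IsUpcycle a n (a ^ (n - d)) u)
    (hSdiam : ∀ i, S i → u i = none)
    (hSu : ∀ i, S (i + a ^ (n - d)) ↔ S i)
    (hδwin : ∀ i, cnt S (i + n) = cnt S i + δ)
    (hup : IsUpcycle a n (a ^ (n - d + δ))
      (fun i => if S i then some (v (cnt S i)) else u i)) :
    IsPerfectNecklace a δ (δ * a ^ (n - d) / n) v := by
  set L := a ^ (n - d) with hLdef
  set K := a ^ δ with hKdef
  have hL : 0 < L := by rw [hLdef]; exact pow_pos (by omega) _
  have hK : 0 < K := by rw [hKdef]; exact pow_pos (by omega) _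
  have hNLK : a ^ (n - d + δ) = L * K := by rw [hLdef, hKdef]; exact pow_add a (n - d) δ
  set t := cnt S L with htdef
  have hnt : n * t = L * δ := nt_eq hSu hδwin
  have ht_eq : δ * L / n = t := by
    rw [show δ * L = t * n by rw [mul_comm t n, mul_comm δ L]; omega]
    exact Nat.mul_div_cancel t hn
  have ht : 0 < t := by
    rcases Nat.eq_zero_or_pos t with h0 | h; swap; · exact h
    exfalso
    have h1 : 0 < L * δ := Nat.mul_pos hL hδ
    have h2 : n * t = 0 := by rw [h0, mul_zero]
    omega
  rw [ht_eq]
  constructor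
  · -- periodicity of v
    intro m
    have hbnd : m < cnt S ((m + 1) * n) := by
      rw [hkn_lemma hδwin]
      have : m + 1 ≤ (m + 1) * δ := Nat.le_mul_of_pos_right _ hδ
      omega
    obtain ⟨p, -, -, hSp, hcp⟩ := cnt_jump (S := S) (m := m) (b := 0) (e := (m + 1) * n)
      (by simp [cnt_zero]) hbnd
    have hper := hup.1 p
    rw [hNLK] at hper
    have hSpN : S (p + L * K) := by
      rw [mul_comm L K]; exact (S_mul_period L hSu K p).2 hSp
    simp only [if_pos hSp, if_pos hSpN] at hper
    have hcnt : cnt S (p + L * K) = m + K * t := by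
      rw [mul_comm L K, cnt_mul_period L hSu, hcp, ← htdef]
    rw [hcnt, hcp] at hper
    have := Option.some.inj hper
    rw [← hKdef, mul_comm t K]
    exact this
  · intro jr y
    obtain ⟨i₀, -, hi₀L, hSi₀, hci₀⟩ := cnt_jump (S := S) (m := (jr : ℕ)) (b := 0) (e := L)
      (by simp [cnt_zero]) (by rw [← htdef]; exact jr.2)
    have hbound : ∀ (j : Fin n), S (i₀ + (j : ℕ)) →
        cnt S (i₀ + (j : ℕ)) - cnt S i₀ < δ := by
      intro j hS
      have := key1 hδwin j.2 hS
      omega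
    set x : Fin n → Fin a := fun j =>
      if h : S (i₀ + (j : ℕ)) then y ⟨cnt S (i₀ + (j : ℕ)) - cnt S i₀, hbound j h⟩
      else (u (i₀ + (j : ℕ))).getD ⟨0, by omega⟩ with hxdef
    have compat : ∀ (j : Fin n) (m : Fin δ), S (i₀ + (j : ℕ)) →
        cnt S (i₀ + (j : ℕ)) = cnt S i₀ + (m : ℕ) → x j = y m := by
      intro j m hS heq
      rw [hxdef]
      simp only [dif_pos hS]
      have hfin : (⟨cnt S (i₀ + (j : ℕ)) - cnt S i₀, hbound j hS⟩ : Fin δ) = m := by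
        apply Fin.ext; simp; omega
      rw [hfin]
    have hcovx : Covers a n u i₀ x := by
      intro j
      by_cases hS : S (i₀ + (j : ℕ))
      · left; exact hSdiam _ hS
      · rcases h0 : u (i₀ + (j : ℕ)) with _ | b
        · left; rfl
        · right
          rw [hxdef]
          simp only [dif_neg hS, h0, Option.getD_some]
    obtain ⟨iw, hiwc, hiwu⟩ := hup.2 x
    have hiwN : (iw : ℕ) < L * K := by rw [← hNLK]; exact iw.2
    have hiwcu : Covers a n u (iw : ℕ) x := ((covw hSdiam _ x).1 hiwc).1
    have hmodc : Covers a n u ((iw : ℕ) % L) x := by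
      have hsh := covers_shift hu.1 ((iw : ℕ) / L) ((iw : ℕ) % L) x
      rw [Nat.mod_add_div'] at hsh
      exact hsh.1 hiwcu
    obtain ⟨i₁, hi₁c, hi₁u⟩ := hu.2 x
    have e1 : (iw : ℕ) % L = (i₁ : ℕ) :=
      congrArg Fin.val (hi₁u ⟨(iw : ℕ) % L, Nat.mod_lt _ hL⟩ hmodc)
    have e2 : i₀ = (i₁ : ℕ) := congrArg Fin.val (hi₁u ⟨i₀, hi₀L⟩ hcovx)
    have hmod : (iw : ℕ) % L = i₀ := by omega
    have hk₀ : (iw : ℕ) / L < K := (Nat.div_lt_iff_lt_mul hL).2 (by rw [mul_comm K L]; exact hiwN)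
    have hiweq : i₀ + ((iw : ℕ) / L) * L = (iw : ℕ) := by
      rw [← hmod]; exact Nat.mod_add_div' _ _
    have hcovK : Covers a n (fun i => if S i then some (v (cnt S i)) else u i)
        (i₀ + ((iw : ℕ) / L) * L) x := by rw [hiweq]; exact hiwc
    have hmatch := (ceq hSdiam hδwin hu.1 hSu htdef.symm i₀ ((iw : ℕ) / L) x y compat hcovx).1 hcovK
    have hidxlt : (jr : ℕ) + ((iw : ℕ) / L) * t < t * K := by
      have h1 : ((iw : ℕ) / L + 1) * t = ((iw : ℕ) / L) * t + t := by ring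
      have h2 : ((iw : ℕ) / L + 1) * t ≤ K * t := Nat.mul_le_mul_right t hk₀
      have h3 := jr.2
      rw [mul_comm t K]
      omega
    refine ⟨⟨(jr : ℕ) + ((iw : ℕ) / L) * t, by rw [← hKdef]; exact hidxlt⟩, ⟨?_, ?_⟩, ?_⟩
    · simp only [Fin.val_mk]
      rw [Nat.add_mul_mod_self_right]
      exact Nat.mod_eq_of_lt jr.2
    · intro m
      have := hmatch m
      rwa [hci₀] at this
    · rintro idx ⟨hres, hm⟩
      have hidxlt' : (idx : ℕ) < K * t :=
        lt_of_lt_of_eq idx.2 (by rw [← hKdef, mul_comm])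
      have hk' : (idx : ℕ) / t < K := (Nat.div_lt_iff_lt_mul ht).2 hidxlt'
      have hidxeq : (jr : ℕ) + ((idx : ℕ) / t) * t = (idx : ℕ) := by
        rw [← hres]; exact Nat.mod_add_div' _ _
      have hm' : ∀ m : Fin δ, v (cnt S i₀ + ((idx : ℕ) / t) * t + (m : ℕ)) = y m := by
        intro m
        have := hm m
        rw [← hidxeq, ← hci₀] at this
        exact this
      have hcov' : Covers a n (fun i => if S i then some (v (cnt S i)) else u i)
          (i₀ + ((idx : ℕ) / t) * L) x :=
        (ceq hSdiam hδwin hu.1 hSu htdef.symm i₀ ((idx : ℕ) / t) x y compat hcovx).2 hm'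
      have hlt' : i₀ + ((idx : ℕ) / t) * L < a ^ (n - d + δ) := by
        rw [hNLK]
        have h1 : ((idx : ℕ) / t + 1) * L = ((idx : ℕ) / t) * L + L := by ring
        have h2 : ((idx : ℕ) / t + 1) * L ≤ K * L := Nat.mul_le_mul_right L hk'
        rw [mul_comm L K]
        omega
      have heqf := hiwu ⟨i₀ + ((idx : ℕ) / t) * L, hlt'⟩ hcov'
      have hval : i₀ + ((idx : ℕ) / t) * L = (iw : ℕ) := congrArg Fin.val heqf
      have hkk : (idx : ℕ) / t = (iw : ℕ) / L :=
        Nat.eq_of_mul_eq_mul_right hL (by omega)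
      apply Fin.ext
      simp only [Fin.val_mk]
      rw [← hidxeq, hkk]


lemma backward (ha : 2 ≤ a) (hn : 0 < n) (hδ : 0 < δ)
    (hu : IsUpcycle a n (a ^ (n - d)) u)
    (hSdiam : ∀ i, S i → u i = none)
    (hSu : ∀ i, S (i + a ^ (n - d)) ↔ S i)
    (hδwin : ∀ i, cnt S (i + n) = cnt S i + δ)
    (hneck : IsPerfectNecklace a δ (δ * a ^ (n - d) / n) v) :
    IsUpcycle a n (a ^ (n - d + δ))
      (fun i => if S i then some (v (cnt S i)) else u i) := by
  set L := a ^ (n - d) with hLdef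
  set K := a ^ δ with hKdef
  have hL : 0 < L := by rw [hLdef]; exact pow_pos (by omega) _
  have hK : 0 < K := by rw [hKdef]; exact pow_pos (by omega) _
  have hNLK : a ^ (n - d + δ) = L * K := by rw [hLdef, hKdef]; exact pow_add a (n - d) δ
  set t := cnt S L with htdef
  have hnt : n * t = L * δ := nt_eq hSu hδwin
  have ht_eq : δ * L / n = t := by
    rw [show δ * L = t * n by rw [mul_comm t n, mul_comm δ L]; omega]
    exact Nat.mul_div_cancel t hn
  have ht : 0 < t := by
    rcases Nat.eq_zero_or_pos t with h0 | h; swap; · exact h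
    exfalso
    have h1 : 0 < L * δ := Nat.mul_pos hL hδ
    have h2 : n * t = 0 := by rw [h0, mul_zero]
    omega
  rw [ht_eq] at hneck
  have vper : ∀ s, v (s + K * t) = v s := by
    intro s
    have h := hneck.1 s
    rw [← hKdef, mul_comm t K] at h
    exact h
  constructor
  · -- periodicity of w
    intro i
    rw [hNLK]
    by_cases hS : S i
    · have hSN : S (i + L * K) := by
        rw [mul_comm L K]; exact (S_mul_period L hSu K i).2 hS
      simp only [if_pos hS, if_pos hSN]
      rw [mul_comm L K, cnt_mul_period L hSu, ← htdef, vper]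
    · have hSN : ¬ S (i + L * K) := by
        rw [mul_comm L K]; exact fun h => hS ((S_mul_period L hSu K i).1 h)
      simp only [if_neg hS, if_neg hSN]
      rw [mul_comm L K]
      exact fn_mul_period u hu.1 K i
  · intro x
    obtain ⟨i₁, hi₁c, hi₁u⟩ := hu.2 x
    have key2' := fun (m : Fin δ) => key2 hδwin ((i₁ : ℕ)) (m : ℕ) m.2
    set y : Fin δ → Fin a :=
      fun m => x ⟨(key2' m).choose, (key2' m).choose_spec.1⟩ with hydef
    have compat : ∀ (j : Fin n) (m : Fin δ), S ((i₁ : ℕ) + (j : ℕ)) →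
        cnt S ((i₁ : ℕ) + (j : ℕ)) = cnt S (i₁ : ℕ) + (m : ℕ) → x j = y m := by
      intro j m hS heq
      obtain ⟨hS', hc'⟩ := (key2' m).choose_spec.2
      have hjj : (key2' m).choose = (j : ℕ) := key3 hS' hS (by omega)
      have hy : y m = x ⟨(key2' m).choose, (key2' m).choose_spec.1⟩ := rfl
      have hfin : (⟨(key2' m).choose, (key2' m).choose_spec.1⟩ : Fin n) = j := by
        apply Fin.ext; simp [hjj]
      rw [hy, hfin]
    have hEk : ∃! k : Fin K,
        ∀ m : Fin δ, v (cnt S (i₁ : ℕ) + (k : ℕ) * t + (m : ℕ)) = y m := by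
      obtain ⟨idx, ⟨hres, hmatch⟩, hidxu⟩ :=
        hneck.2 ⟨cnt S (i₁ : ℕ) % t, Nat.mod_lt _ ht⟩ y
      have step2 : ∃! k : Fin K,
          ∀ m : Fin δ, v (cnt S (i₁ : ℕ) % t + (k : ℕ) * t + (m : ℕ)) = y m := by
        have hidxlt' : (idx : ℕ) < K * t :=
          lt_of_lt_of_eq idx.2 (by rw [← hKdef, mul_comm])
        have hres' : (idx : ℕ) % t = cnt S (i₁ : ℕ) % t := hres
        refine ⟨⟨(idx : ℕ) / t, (Nat.div_lt_iff_lt_mul ht).2 hidxlt'⟩, ?_, ?_⟩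
        · intro m
          have hh := hmatch m
          rwa [show (idx : ℕ) = cnt S (i₁ : ℕ) % t + (idx : ℕ) / t * t by
            rw [← hres']; exact (Nat.mod_add_div' _ _).symm] at hh
        · rintro k hk
          have hlt : cnt S (i₁ : ℕ) % t + (k : ℕ) * t < t * K := by
            have h1 : ((k : ℕ) + 1) * t = (k : ℕ) * t + t := by ring
            have h2 : ((k : ℕ) + 1) * t ≤ K * t := Nat.mul_le_mul_right t k.2
            have h3 : cnt S (i₁ : ℕ) % t < t := Nat.mod_lt _ ht
            rw [mul_comm t K]
            omega
          have heqf := hidxu ⟨cnt S (i₁ : ℕ) % t + (k : ℕ) * t,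
              lt_of_lt_of_eq hlt (by rw [← hKdef])⟩
            ⟨by simp only [Fin.val_mk]
                rw [Nat.add_mul_mod_self_right]
                exact Nat.mod_eq_of_lt (Nat.mod_lt _ ht), hk⟩
          have hval : cnt S (i₁ : ℕ) % t + (k : ℕ) * t = (idx : ℕ) := congrArg Fin.val heqf
          apply Fin.ext
          simp only [Fin.val_mk]
          rw [← hval, Nat.add_mul_div_right _ _ ht, Nat.div_eq_of_lt (Nat.mod_lt _ ht), Nat.zero_add]
      have hP : ∀ z, (∀ m : Fin δ, v (cnt S (i₁ : ℕ) % t + (z + K) * t + (m : ℕ)) = y m) ↔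
          (∀ m : Fin δ, v (cnt S (i₁ : ℕ) % t + z * t + (m : ℕ)) = y m) := by
        intro z
        refine forall_congr' fun m => ?_
        rw [show cnt S (i₁ : ℕ) % t + (z + K) * t + (m : ℕ) =
          (cnt S (i₁ : ℕ) % t + z * t + (m : ℕ)) + K * t by ring, vper]
      have hshift := existsUnique_fin_shift hK
        (fun z => ∀ m : Fin δ, v (cnt S (i₁ : ℕ) % t + z * t + (m : ℕ)) = y m) hP
        (cnt S (i₁ : ℕ) / t)
      have harg : ∀ k : ℕ, cnt S (i₁ : ℕ) % t + (k + cnt S (i₁ : ℕ) / t) * t =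
          cnt S (i₁ : ℕ) + k * t := by
        intro k
        rw [Nat.add_mul, show cnt S (i₁ : ℕ) % t + (k * t + cnt S (i₁ : ℕ) / t * t) =
          (cnt S (i₁ : ℕ) % t + cnt S (i₁ : ℕ) / t * t) + k * t by ring, Nat.mod_add_div']
      exact (existsUnique_congr fun k =>
        forall_congr' fun m => by rw [harg (k : ℕ)]).1 (hshift.2 step2)
    obtain ⟨k₀, hk₀m, hk₀u⟩ := hEk
    have hlt₀ : (i₁ : ℕ) + (k₀ : ℕ) * L < a ^ (n - d + δ) := by
      rw [hNLK]
      have h1 : ((k₀ : ℕ) + 1) * L = (k₀ : ℕ) * L + L := by ring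
      have h2 : ((k₀ : ℕ) + 1) * L ≤ K * L := Nat.mul_le_mul_right L k₀.2
      have h3 := i₁.2
      rw [mul_comm L K]
      omega
    refine ⟨⟨(i₁ : ℕ) + (k₀ : ℕ) * L, hlt₀⟩, ?_, ?_⟩
    · exact (ceq hSdiam hδwin hu.1 hSu htdef.symm (i₁ : ℕ) (k₀ : ℕ) x y compat hi₁c).2 hk₀m
    · rintro iw hiwc
      have hiwN : (iw : ℕ) < L * K := by rw [← hNLK]; exact iw.2
      have hiwcu : Covers a n u (iw : ℕ) x := ((covw hSdiam _ x).1 hiwc).1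
      have hmodc : Covers a n u ((iw : ℕ) % L) x := by
        have hsh := covers_shift hu.1 ((iw : ℕ) / L) ((iw : ℕ) % L) x
        rw [Nat.mod_add_div'] at hsh
        exact hsh.1 hiwcu
      have e1 : (iw : ℕ) % L = (i₁ : ℕ) :=
        congrArg Fin.val (hi₁u ⟨(iw : ℕ) % L, Nat.mod_lt _ hL⟩ hmodc)
      have hk' : (iw : ℕ) / L < K :=
        (Nat.div_lt_iff_lt_mul hL).2 (by rw [mul_comm K L]; exact hiwN)
      have hiweq : (i₁ : ℕ) + ((iw : ℕ) / L) * L = (iw : ℕ) := by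
        rw [← e1]; exact Nat.mod_add_div' _ _
      have hcovK : Covers a n (fun i => if S i then some (v (cnt S i)) else u i)
          ((i₁ : ℕ) + ((iw : ℕ) / L) * L) x := by rw [hiweq]; exact hiwc
      have hm' := (ceq hSdiam hδwin hu.1 hSu htdef.symm (i₁ : ℕ) ((iw : ℕ) / L)
        x y compat hi₁c).1 hcovK
      have hkk := hk₀u ⟨(iw : ℕ) / L, hk'⟩ hm'
      have hkval : (iw : ℕ) / L = (k₀ : ℕ) := congrArg Fin.val hkk
      apply Fin.ext
      simp only [Fin.val_mk]
      rw [← hiweq, hkval]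


end LiftAux

/-- Characterization of lifts: let `u` be an upcycle for `(Fin a)^n` with diamondicity
`d`, let `S` be an `n`-periodic set of diamond positions of `u` (also periodic with the
length of `u`) with `δ` selected diamonds per window, and let `w` be obtained from
`u^(a^δ)` by replacing the copies of the selected diamonds, in increasing order of
position, with the characters of the cyclic total word `v`.  Then `w` is an upcycle
for `(Fin a)^n` if and only if `v` is an `(a, δ, δ·a^(n-d)/n)`-perfect necklace, and in
that case `w` has diamondicity `d - δ`. -/
theorem lift_characterization (a n d δ : ℕ) (ha : 2 ≤ a) (hn : 0 < n) (hd : d ≤ n)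
    (hδd : δ ≤ d)
    (u : ℕ → Option (Fin a))
    (hu : IsUpcycle a n (a ^ (n - d)) u)
    (hdiam : ∀ i, ((Finset.range n).filter (fun j => u (i + j) = none)).card = d)
    (S : ℕ → Prop) [DecidablePred S]
    (hSdiam : ∀ i, S i → u i = none)
    (hSn : ∀ i, S (i + n) ↔ S i)
    (hSu : ∀ i, S (i + a ^ (n - d)) ↔ S i)
    (hSδ : ∀ i, ((Finset.range n).filter (fun j => S (i + j))).card = δ)
    (v : ℕ → Fin a) :
    (IsUpcycle a n (a ^ (n - d + δ))
        (fun i => if S i then some (v (((Finset.range i).filter S).card)) else u i) ↔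
      IsPerfectNecklace a δ (δ * a ^ (n - d) / n) v) ∧
    (IsUpcycle a n (a ^ (n - d + δ))
        (fun i => if S i then some (v (((Finset.range i).filter S).card)) else u i) →
      ∀ i, ((Finset.range n).filter (fun j =>
          (if S (i + j) then some (v (((Finset.range (i + j)).filter S).card))
            else u (i + j)) = none)).card = d - δ) := by
  classical
  have hcnt : ∀ i, ((Finset.range i).filter S).card = LiftAux.cnt S i := fun _ => rfl
  have hdia : ∀ (i : ℕ), ((Finset.range n).filter (fun j =>
      (if S (i + j) then some (v (((Finset.range (i + j)).filter S).card))
        else u (i + j)) = none)).card = d - δ := by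
    intro i
    have hset : (Finset.range n).filter (fun j =>
        (if S (i + j) then some (v (((Finset.range (i + j)).filter S).card))
          else u (i + j)) = none) =
        ((Finset.range n).filter (fun j => u (i + j) = none)) \
        ((Finset.range n).filter (fun j => S (i + j))) := by
      ext j
      simp only [Finset.mem_filter, Finset.mem_sdiff]
      constructor
      · rintro ⟨hj, hw⟩
        by_cases hS : S (i + j)
        · simp [hS] at hw
        · simp only [hS, if_false] at hw
          exact ⟨⟨hj, hw⟩, fun hc => hS hc.2⟩
      · rintro ⟨⟨hj, hun⟩, hns⟩
        have hS : ¬ S (i + j) := fun hc => hns ⟨hj, hc⟩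
        exact ⟨hj, by simp [hS, hun]⟩
    have hsub : ((Finset.range n).filter (fun j => S (i + j))) ⊆
        ((Finset.range n).filter (fun j => u (i + j) = none)) := by
      intro j hj
      simp only [Finset.mem_filter] at hj ⊢
      exact ⟨hj.1, hSdiam _ hj.2⟩
    rw [hset, Finset.card_sdiff_of_subset hsub, hdiam i, hSδ i]
  refine ⟨?_, fun _ => hdia⟩
  by_cases hδ0 : δ = 0
  · subst hδ0
    have hSfalse : ∀ i, ¬ S i := by
      intro i hSi
      have h := hSδ i
      rw [Finset.card_eq_zero] at h
      have hmem : (0 : ℕ) ∈ (Finset.range n).filter (fun j => S (i + j)) := by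
        simp only [Finset.mem_filter, Finset.mem_range]
        exact ⟨hn, by simpa using hSi⟩
      rw [h] at hmem
      simp at hmem
    have hwu : (fun i => if S i then some (v (((Finset.range i).filter S).card)) else u i) = u :=
      funext fun i => if_neg (hSfalse i)
    apply iff_of_true
    · rw [hwu]
      simpa using hu
    · constructor
      · intro i
        simp
      · intro j
        exact absurd j.2 (by simp)
  · have hδ : 0 < δ := Nat.pos_of_ne_zero hδ0
    have hδwin : ∀ i, LiftAux.cnt S (i + n) = LiftAux.cnt S i + δ := by
      intro i
      rw [LiftAux.cnt_add_count, hSδ i]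
    simp only [hcnt]
    exact ⟨fun h => LiftAux.forward ha hn hδ hu hSdiam hSu hδwin h,
      fun h => LiftAux.backward ha hn hδ hu hSdiam hSu hδwin h⟩
end

section
/- Every upcycle for A^n lifts to a De Bruijn cycle: there exists a De Bruijn cycle w for A^n such that w is covered by the concatenation of a^d copies of u, where d is the diamondicity of u and a = |A|. -/
/-- `w`, viewed as a cyclic word of length `a ^ n`, is a De Bruijn cycle for
`(Fin a)^n`. -/
def IsDeBruijn (a n : ℕ) (w : ℕ → Fin a) : Prop :=
  (∀ i, w (i + a ^ n) = w i) ∧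
  ∀ x : Fin n → Fin a, ∃! i : Fin (a ^ n), ∀ m : Fin n, w ((i : ℕ) + (m : ℕ)) = x m


open Finset

section Euler

variable {Ed V : Type*} [DecidableEq Ed] [DecidableEq V]
variable (src dst : Ed → V)

/-- Counting in/out edges at `v` along a chain. -/
lemma chain_count (v : V) :
    ∀ (t : List Ed) (e : Ed), List.Chain' (fun x y => dst x = src y) (e :: t) →
      (e :: t).countP (fun x => decide (dst x = v)) + (if src e = v then 1 else 0)
      = (e :: t).countP (fun x => decide (src x = v)) +
        (if dst ((e :: t).getLast (List.cons_ne_nil _ _)) = v then 1 else 0) := by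
  intro t
  induction t with
  | nil =>
    intro e _
    simp only [List.countP_cons, List.countP_nil, List.getLast_singleton,
      decide_eq_true_eq]
    split_ifs <;> simp_all
  | cons b t ih =>
    intro e hch
    replace hch := List.isChain_cons_cons.1 hch
    have hgl : (e :: b :: t).getLast (List.cons_ne_nil _ _)
        = (b :: t).getLast (List.cons_ne_nil _ _) := by
      simp [List.getLast_cons]
    have key := ih b hch.2
    rw [hgl]
    simp only [List.countP_cons, decide_eq_true_eq]
    rw [hch.1]
    simp only [List.countP_cons, decide_eq_true_eq] at key
    omega

/-- A closed chain is balanced at every vertex. -/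
lemma closed_chain_count (v : V) (l : List Ed) (hl : l ≠ [])
    (hch : List.Chain' (fun x y => dst x = src y) l)
    (hcl : dst (l.getLast hl) = src (l.head hl)) :
    l.countP (fun x => decide (dst x = v)) = l.countP (fun x => decide (src x = v)) := by
  obtain ⟨e, t, rfl⟩ := List.exists_cons_of_ne_nil hl
  have key := chain_count src dst v t e hch
  simp only [List.head_cons] at hcl
  rw [hcl] at key
  omega

lemma countP_eq_card_filter {l : List Ed} (hl : l.Nodup) (p : Ed → Prop) [DecidablePred p] :
    l.countP (fun x => decide (p x)) = (l.toFinset.filter p).card := by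
  rw [List.countP_eq_length_filter, ← List.toFinset_card_of_nodup (hl.filter _),
    List.toFinset_filter]
  simp

/-- Extension step: a non-closed trail inside a balanced edge set can be extended. -/
lemma exists_extension (S : Finset Ed)
    (hbal : ∀ v, (S.filter fun x => dst x = v).card = (S.filter fun x => src x = v).card)
    (l : List Ed) (hl : l ≠ []) (hnd : l.Nodup)
    (hch : List.Chain' (fun x y => dst x = src y) l)
    (hsub : ∀ x ∈ l, x ∈ S)
    (hncl : dst (l.getLast hl) ≠ src (l.head hl)) :
    ∃ e', e' ∈ S ∧ e' ∉ l ∧ src e' = dst (l.getLast hl) := by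
  classical
  set w := dst (l.getLast hl) with hw
  obtain ⟨e, t, rfl⟩ := List.exists_cons_of_ne_nil hl
  have hcount := chain_count src dst w t e hch
  have hse0 : src ((e :: t).head hl) ≠ w := fun h => hncl h.symm
  simp only [List.head_cons] at hse0
  have hse : (if src e = w then 1 else 0) = 0 := by simp [hse0]
  have hdl : (if dst ((e :: t).getLast (List.cons_ne_nil _ _)) = w then 1 else 0) = 1 := by
    simp [← hw]
  rw [hse, hdl] at hcount
  have hIn : (e :: t).countP (fun x => decide (dst x = w))
      = ((e :: t).toFinset.filter fun x => dst x = w).card := countP_eq_card_filter hnd _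
  have hOut : (e :: t).countP (fun x => decide (src x = w))
      = ((e :: t).toFinset.filter fun x => src x = w).card := countP_eq_card_filter hnd _
  have hsubd : ((e :: t).toFinset.filter fun x => dst x = w) ⊆ (S.filter fun x => dst x = w) := by
    intro x hx
    simp only [mem_filter, List.mem_toFinset] at hx ⊢
    exact ⟨hsub _ hx.1, hx.2⟩
  have hne : ¬ ((S.filter fun x => src x = w) ⊆ ((e :: t).toFinset.filter fun x => src x = w)) := by
    intro hc
    have h1 := Finset.card_le_card hsubd
    have h2 := Finset.card_le_card hc
    have h3 := hbal w
    omega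
  obtain ⟨e', he'S, he'n⟩ := Finset.not_subset.1 hne
  have he'src : src e' = w := (Finset.mem_filter.1 he'S).2
  refine ⟨e', (Finset.mem_filter.1 he'S).1, ?_, he'src⟩
  intro hmem
  exact he'n (Finset.mem_filter.2 ⟨List.mem_toFinset.2 hmem, he'src⟩)

end Euler

section Euler2

variable {Ed V : Type*} [DecidableEq Ed] [DecidableEq V]
variable (src dst : Ed → V)

/-- From any edge of a balanced edge set there is a closed trail starting with it. -/
lemma exists_closed_from (S : Finset Ed)
    (hbal : ∀ v, (S.filter fun x => dst x = v).card = (S.filter fun x => src x = v).card)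
    (e : Ed) (he : e ∈ S) :
    ∃ L : List Ed, ∃ hL : L ≠ [], L.Nodup ∧ L.Chain' (fun x y => dst x = src y) ∧
      (∀ x ∈ L, x ∈ S) ∧ L.head hL = e ∧ dst (L.getLast hL) = src e := by
  classical
  suffices H : ∀ m (l : List Ed) (hl : l ≠ []), l.Nodup →
      l.Chain' (fun x y => dst x = src y) → (∀ x ∈ l, x ∈ S) → l.head hl = e →
      S.card - l.length ≤ m →
      ∃ L : List Ed, ∃ hL : L ≠ [], L.Nodup ∧ L.Chain' (fun x y => dst x = src y) ∧
        (∀ x ∈ L, x ∈ S) ∧ L.head hL = e ∧ dst (L.getLast hL) = src e by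
    exact H S.card [e] (by simp) (by simp) (List.isChain_singleton _) (by simpa) rfl (by omega)
  intro m
  induction m with
  | zero =>
    intro l hl hnd hch hsub hhead hm
    by_cases hcl : dst (l.getLast hl) = src e
    · exact ⟨l, hl, hnd, hch, hsub, hhead, hcl⟩
    · exfalso
      have hncl : dst (l.getLast hl) ≠ src (l.head hl) := by rw [hhead]; exact hcl
      obtain ⟨e', he'S, he'l, -⟩ := exists_extension src dst S hbal l hl hnd hch hsub hncl
      have hcardl : l.toFinset.card = l.length := List.toFinset_card_of_nodup hnd
      have hsub' : l.toFinset ⊆ S := fun x hx => hsub x (List.mem_toFinset.1 hx)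
      have hSl : l.toFinset = S := Finset.eq_of_subset_of_card_le hsub' (by omega)
      exact he'l (List.mem_toFinset.1 (hSl ▸ he'S))
  | succ m ih =>
    intro l hl hnd hch hsub hhead hm
    by_cases hcl : dst (l.getLast hl) = src e
    · exact ⟨l, hl, hnd, hch, hsub, hhead, hcl⟩
    · have hncl : dst (l.getLast hl) ≠ src (l.head hl) := by rw [hhead]; exact hcl
      obtain ⟨e', he'S, he'l, he'src⟩ := exists_extension src dst S hbal l hl hnd hch hsub hncl
      have hlne : l ++ [e'] ≠ [] := by simp
      refine ih (l ++ [e']) hlne ?_ ?_ ?_ ?_ ?_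
      · exact List.Nodup.append hnd (List.nodup_singleton _)
          (fun a ha hb => by simp at hb; exact absurd (hb ▸ ha) he'l)
      · refine List.isChain_append.2 ⟨hch, List.isChain_singleton _, ?_⟩
        intro x hx y hy
        rw [List.getLast?_eq_getLast hl] at hx
        simp only [List.head?_cons, Option.mem_some_iff] at hx hy
        rw [← hx, ← hy] at *
        rw [← he'src]
      · intro x hx
        rcases List.mem_append.1 hx with h | h
        · exact hsub x h
        · simp at h; exact h ▸ he'S
      · rw [List.head_append_of_ne_nil hl]; exact hhead
      · have : (l ++ [e']).length = l.length + 1 := by simp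
        omega

/-- Walking from a vertex of the trail, either we stay on the trail's
vertices or we find an unused edge leaving the trail's vertices. -/
lemma reach_find (l : List Ed) {v w : V}
    (h : Relation.ReflTransGen (fun x y => ∃ ε, src ε = x ∧ dst ε = y) v w)
    (hv : v ∈ l.map dst) :
    w ∈ l.map dst ∨ ∃ ε, ε ∉ l ∧ src ε ∈ l.map dst := by
  induction h with
  | refl => exact Or.inl hv
  | tail hab hbc ih =>
    rcases ih with hb | hex
    · obtain ⟨ε, hεs, hεd⟩ := hbc
      by_cases hmem : ε ∈ l
      · exact Or.inl (List.mem_map.2 ⟨ε, hmem, hεd⟩)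
      · exact Or.inr ⟨ε, hmem, hεs ▸ hb⟩
    · exact Or.inr hex

/-- Cyclic chain condition. -/
def IsCC (l : List Ed) : Prop :=
  ∃ h : 0 < l.length, ∀ t : ℕ,
    dst (l.get ⟨t % l.length, Nat.mod_lt _ h⟩) = src (l.get ⟨(t+1) % l.length, Nat.mod_lt _ h⟩)

lemma isCC_of {l : List Ed} (hl : l ≠ [])
    (hch : List.Chain' (fun x y => dst x = src y) l)
    (hcl : dst (l.getLast hl) = src (l.head hl)) : IsCC src dst l := by
  have hpos : 0 < l.length := List.length_pos_iff.2 hl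
  refine ⟨hpos, fun t => ?_⟩
  have hi : t % l.length < l.length := Nat.mod_lt _ hpos
  rcases Nat.lt_or_ge (t % l.length + 1) l.length with hlt | hge
  · have h2 : (t + 1) % l.length = t % l.length + 1 := by
      rw [← Nat.mod_add_mod]
      exact Nat.mod_eq_of_lt hlt
    simp only [h2]
    exact List.isChain_iff_getElem.1 hch (t % l.length) (by omega)
  · have hie : t % l.length = l.length - 1 := by omega
    have h2 : (t + 1) % l.length = 0 := by
      rw [← Nat.mod_add_mod, hie]
      have : l.length - 1 + 1 = l.length := by omega
      rw [this, Nat.mod_self]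
    have e1 : l.get ⟨t % l.length, hi⟩ = l.getLast hl := by
      rw [List.getLast_eq_getElem]
      simp only [hie, List.get_eq_getElem]
    have e2 : l.get ⟨(t+1) % l.length, Nat.mod_lt _ hpos⟩ = l.head hl := by
      simp only [h2]
      exact List.get_mk_zero hpos
    rw [e1, e2, hcl]

lemma isCC_chain' {l : List Ed} (h : IsCC src dst l) :
    List.Chain' (fun x y => dst x = src y) l := by
  obtain ⟨hpos, hcc⟩ := h
  refine List.isChain_iff_getElem.2 fun i hi => ?_
  have := hcc i
  have h1 : i % l.length = i := Nat.mod_eq_of_lt (by omega)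
  have h2 : (i + 1) % l.length = i + 1 := Nat.mod_eq_of_lt (by omega)
  simp only [h1, h2] at this
  exact this

lemma isCC_closed {l : List Ed} (h : IsCC src dst l) (hl : l ≠ []) :
    dst (l.getLast hl) = src (l.head hl) := by
  obtain ⟨hpos, hcc⟩ := h
  have := hcc (l.length - 1)
  have h1 : (l.length - 1) % l.length = l.length - 1 := Nat.mod_eq_of_lt (by omega)
  have h2 : (l.length - 1 + 1) % l.length = 0 := by
    have : l.length - 1 + 1 = l.length := by omega
    rw [this, Nat.mod_self]
  simp only [h1, h2] at this
  rw [List.getLast_eq_getElem]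
  simp only [List.get_eq_getElem] at this
  rw [this]
  congr 1
  exact List.get_mk_zero hpos

lemma isCC_rotate {l : List Ed} (h : IsCC src dst l) (k : ℕ) :
    IsCC src dst (l.rotate k) := by
  obtain ⟨hpos, hcc⟩ := h
  have hlen : (l.rotate k).length = l.length := List.length_rotate l k
  refine ⟨by omega, fun t => ?_⟩
  rw [List.get_rotate, List.get_rotate]
  have l1 : (t % (l.rotate k).length + k) % l.length = (t + k) % l.length := by
    rw [hlen, Nat.mod_add_mod]
  have l2 : ((t+1) % (l.rotate k).length + k) % l.length = (t + k + 1) % l.length := by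
    rw [hlen, Nat.mod_add_mod]
    congr 1
    omega
  simp only [l1, l2]
  exact hcc (t + k)

end Euler2

section Euler3

open Finset

variable {Ed V : Type*} [DecidableEq Ed] [DecidableEq V] [Fintype Ed]
variable (src dst : Ed → V)

lemma euler_grow
    (hbal : ∀ v, ((univ : Finset Ed).filter fun x => dst x = v).card
      = ((univ : Finset Ed).filter fun x => src x = v).card)
    (hconn : ∀ e e' : Ed,
      Relation.ReflTransGen (fun x y => ∃ ε, src ε = x ∧ dst ε = y) (dst e) (src e'))
    (l : List Ed) (hl : l ≠ []) (hnd : l.Nodup) (hcc : IsCC src dst l)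
    (hlen : l.length < Fintype.card Ed) :
    ∃ l' : List Ed, l' ≠ [] ∧ l'.Nodup ∧ IsCC src dst l' ∧ l.length < l'.length := by
  classical
  have hpos := hcc.1
  -- find an unused edge
  have hcardl : l.toFinset.card = l.length := List.toFinset_card_of_nodup hnd
  have hneq : l.toFinset ≠ univ := fun h => by
    rw [h, card_univ] at hcardl; omega
  obtain ⟨e', -, he'⟩ := Finset.exists_of_ssubset (lt_of_le_of_ne (subset_univ _) hneq)
  -- find an unused edge whose source is a visited vertex
  have hv : dst (l.head hl) ∈ l.map dst := List.mem_map.2 ⟨l.head hl, List.head_mem hl, rfl⟩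
  obtain ⟨ε, hεl, hεv⟩ : ∃ ε, ε ∉ l ∧ src ε ∈ l.map dst := by
    rcases reach_find src dst l (hconn (l.head hl) e') hv with hmem | hex
    · exact ⟨e', fun h => he' (List.mem_toFinset.2 h), hmem⟩
    · exact hex
  obtain ⟨g, hg, hgd⟩ := List.mem_map.1 hεv
  obtain ⟨i, hi⟩ := List.mem_iff_get.1 hg
  -- rotate so the trail ends right where ε leaves
  set l1 := l.rotate (i.1 + 1) with hl1def
  have hlen1 : l1.length = l.length := List.length_rotate l _
  have hl1ne : l1 ≠ [] := by
    intro h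
    rw [h] at hlen1
    simp at hlen1
    omega
  have hnd1 : l1.Nodup := List.nodup_rotate.2 hnd
  have hcc1 : IsCC src dst l1 := isCC_rotate src dst hcc _
  have hlast1 : l1.getLast hl1ne = l.get i := by
    rw [List.getLast_eq_getElem, ← List.get_eq_getElem (i := ⟨l1.length - 1, Nat.sub_lt (List.length_pos_iff.2 hl1ne) one_pos⟩), List.get_rotate]
    congr 1
    apply Fin.ext
    show (l1.length - 1 + (i.1 + 1)) % l.length = i.1
    have h1 : l1.length - 1 + (i.1 + 1) = l.length + i.1 := by
      rw [hlen1]; omega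
    rw [h1, Nat.add_mod_left]
    exact Nat.mod_eq_of_lt i.isLt
  have hjunc : dst (l1.getLast hl1ne) = src ε := by rw [hlast1, hi, hgd]
  -- complement of the rotated trail
  set S := (univ : Finset Ed) \ l1.toFinset with hSdef
  have hmem_l1 : ∀ x, x ∈ l1 ↔ x ∈ l := fun x => List.mem_rotate
  have hεS : ε ∈ S := mem_sdiff.2 ⟨mem_univ _,
    fun h => hεl ((hmem_l1 ε).1 (List.mem_toFinset.1 h))⟩
  have key : ∀ (p : Ed → Prop) [DecidablePred p],
      (S.filter p).card + (l1.toFinset.filter p).card = ((univ : Finset Ed).filter p).card := by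
    intro p hp
    rw [← Finset.card_union_of_disjoint (Finset.disjoint_filter_filter sdiff_disjoint)]
    congr 1
    ext x
    simp only [mem_union, mem_filter, hSdef, mem_sdiff, mem_univ, true_and]
    tauto
  have hbalS : ∀ v, (S.filter fun x => dst x = v).card = (S.filter fun x => src x = v).card := by
    intro v
    have hb1 := closed_chain_count src dst v l1 hl1ne (isCC_chain' src dst hcc1)
      (isCC_closed src dst hcc1 hl1ne)
    have hc1 : l1.countP (fun x => decide (dst x = v))
        = (l1.toFinset.filter fun x => dst x = v).card := countP_eq_card_filter hnd1 _
    have hc2 : l1.countP (fun x => decide (src x = v))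
        = (l1.toFinset.filter fun x => src x = v).card := countP_eq_card_filter hnd1 _
    have k1 := key (fun x => dst x = v)
    have k2 := key (fun x => src x = v)
    have hb := hbal v
    omega
  -- closed trail in the complement starting at ε
  obtain ⟨m, hmne, hmnd, hmch, hmsub, hmhead, hmcl⟩ := exists_closed_from src dst S hbalS ε hεS
  have hdisj : l1.Disjoint m := fun a hal ham =>
    (mem_sdiff.1 (hmsub a ham)).2 (List.mem_toFinset.2 hal)
  have happne : l1 ++ m ≠ [] := by simp [hl1ne]
  refine ⟨l1 ++ m, happne, List.Nodup.append hnd1 hmnd hdisj, ?_, ?_⟩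
  · refine isCC_of src dst happne ?_ ?_
    · refine List.isChain_append.2 ⟨isCC_chain' src dst hcc1, hmch, ?_⟩
      intro x hx y hy
      rw [List.getLast?_eq_getLast hl1ne] at hx
      rw [List.head?_eq_head hmne] at hy
      simp only [Option.mem_some_iff] at hx hy
      rw [← hx, ← hy, hmhead, hjunc]
    · have hgl : (l1 ++ m).getLast happne = m.getLast hmne := List.getLast_append_of_ne_nil _ hmne
      have hhd : (l1 ++ m).head happne = l1.head hl1ne := List.head_append_of_ne_nil hl1ne
      rw [hgl, hhd, hmcl, ← hmhead]
      rw [← isCC_closed src dst hcc1 hl1ne, hjunc, hmhead]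
  · have : (l1 ++ m).length = l1.length + m.length := List.length_append
    have hmpos : 0 < m.length := List.length_pos_iff.2 hmne
    omega

theorem euler_circuit [Nonempty Ed]
    (hbal : ∀ v, ((univ : Finset Ed).filter fun x => dst x = v).card
      = ((univ : Finset Ed).filter fun x => src x = v).card)
    (hconn : ∀ e e' : Ed,
      Relation.ReflTransGen (fun x y => ∃ ε, src ε = x ∧ dst ε = y) (dst e) (src e')) :
    ∃ σ : ℕ → Ed, (∀ t, σ (t + Fintype.card Ed) = σ t) ∧
      (∀ t t', σ t = σ t' → t % Fintype.card Ed = t' % Fintype.card Ed) ∧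
      (∀ t, dst (σ t) = src (σ (t + 1))) := by
  classical
  suffices H : ∃ l : List Ed, l.Nodup ∧ l.length = Fintype.card Ed ∧ IsCC src dst l by
    obtain ⟨l, hnd, hlen, hpos, hcc⟩ := H
    refine ⟨fun t => l.get ⟨t % l.length, Nat.mod_lt _ hpos⟩, ?_, ?_, ?_⟩
    · intro t
      have h1 : (t + Fintype.card Ed) % l.length = t % l.length := by
        rw [hlen]; exact Nat.add_mod_right _ _
      simp only [h1]
    · intro t t' h
      have h2 := List.nodup_iff_injective_get.1 hnd h
      have h3 : t % l.length = t' % l.length := congrArg Fin.val h2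
      rwa [hlen] at h3
    · intro t
      exact hcc t
  obtain ⟨e⟩ := ‹Nonempty Ed›
  obtain ⟨L0, hL0ne, hnd0, hch0, -, hhead0, hcl0⟩ :=
    exists_closed_from src dst univ hbal e (mem_univ e)
  have hcc0 : IsCC src dst L0 := isCC_of src dst hL0ne hch0 (by rw [hhead0]; exact hcl0)
  suffices H2 : ∀ (k : ℕ) (l : List Ed), l ≠ [] → l.Nodup → IsCC src dst l →
      Fintype.card Ed - l.length ≤ k →
      ∃ l' : List Ed, l'.Nodup ∧ l'.length = Fintype.card Ed ∧ IsCC src dst l' by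
    exact H2 (Fintype.card Ed) L0 hL0ne hnd0 hcc0 (by omega)
  intro k
  induction k with
  | zero =>
    intro l hl hnd hcc hk
    have hle : l.length ≤ Fintype.card Ed := List.Nodup.length_le_card hnd
    exact ⟨l, hnd, by omega, hcc⟩
  | succ k ih =>
    intro l hl hnd hcc hk
    by_cases hfull : l.length = Fintype.card Ed
    · exact ⟨l, hnd, hfull, hcc⟩
    · have hlt : l.length < Fintype.card Ed :=
        lt_of_le_of_ne (List.Nodup.length_le_card hnd) hfull
      obtain ⟨l', h1, h2, h3, h4⟩ := euler_grow src dst hbal hconn l hl hnd hcc hlt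
      exact ih l' h1 h2 h3 (by omega)

end Euler3

section CP

lemma cp_exists (a d M : ℕ) (ha : 1 ≤ a) (hd : 1 ≤ d) (hM : 1 ≤ M) :
    ∃ F : ℕ → Fin a, (∀ t, F (t + M * a ^ d) = F t) ∧
      ∀ c k k', k < a ^ d → k' < a ^ d →
        (∀ r, r < d → F (c + k * M + r) = F (c + k' * M + r)) → k = k' := by
  classical
  haveI : NeZero M := ⟨by omega⟩
  haveI : NeZero a := ⟨by omega⟩
  set Ed := (ZMod M × (Fin d → Fin a)) with hEd
  set V := (ZMod M × (ℕ → Fin a)) with hV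
  haveI : DecidableEq V := Classical.decEq _
  haveI : Nonempty Ed := ⟨((0 : ZMod M), fun _ => ⟨0, by omega⟩)⟩
  set src : Ed → V := fun e => (e.1, fun j => if h : j + 1 < d then e.2 ⟨j, by omega⟩ else
    ⟨0, by omega⟩) with hsrc
  set dst : Ed → V := fun e => (e.1 + 1, fun j => if h : j + 1 < d then e.2 ⟨j + 1, h⟩ else
    ⟨0, by omega⟩) with hdst
  set φ : Ed → Ed := fun e => (e.1 + 1, fun i : Fin d => e.2 ⟨(i.1 + 1) % d,
    Nat.mod_lt _ (by omega)⟩) with hφ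
  set ψ : Ed → Ed := fun e => (e.1 - 1, fun i : Fin d => e.2 ⟨(i.1 + (d - 1)) % d,
    Nat.mod_lt _ (by omega)⟩) with hψ
  have hψφ : ∀ e, ψ (φ e) = e := by
    intro e
    refine Prod.ext (by simp [hφ, hψ]) (funext fun i => ?_)
    simp only [hφ, hψ]
    refine congrArg e.2 (Fin.ext ?_)
    show ((i.1 + (d - 1)) % d + 1) % d = i.1
    rw [Nat.mod_add_mod]
    have h3 : i.1 + (d - 1) + 1 = d + i.1 := by omega
    rw [h3, Nat.add_mod_left]
    exact Nat.mod_eq_of_lt i.isLt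
  have hφψ : ∀ e, φ (ψ e) = e := by
    intro e
    refine Prod.ext (by simp [hφ, hψ]) (funext fun i => ?_)
    simp only [hφ, hψ]
    refine congrArg e.2 (Fin.ext ?_)
    show ((i.1 + 1) % d + (d - 1)) % d = i.1
    rw [Nat.mod_add_mod]
    have h3 : i.1 + 1 + (d - 1) = d + i.1 := by omega
    rw [h3, Nat.add_mod_left]
    exact Nat.mod_eq_of_lt i.isLt
  have hedge : ∀ e, dst e = src (φ e) := by
    intro e
    refine Prod.ext (by simp [hφ, hsrc, hdst]) (funext fun j => ?_)
    simp only [hφ, hsrc, hdst]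
    by_cases h : j + 1 < d
    · rw [dif_pos h, dif_pos h]
      refine congrArg e.2 (Fin.ext ?_)
      show j + 1 = (j + 1) % d
      exact (Nat.mod_eq_of_lt h).symm
    · rw [dif_neg h, dif_neg h]
  have hbal : ∀ v, ((univ : Finset Ed).filter fun x => dst x = v).card
      = ((univ : Finset Ed).filter fun x => src x = v).card := by
    intro v
    apply Finset.card_bij' (fun e _ => φ e) (fun e _ => ψ e)
    · intro e he
      simp only [mem_filter, mem_univ, true_and] at he ⊢
      rw [← hedge e]; exact he
    · intro e he
      simp only [mem_filter, mem_univ, true_and] at he ⊢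
      have h2 := hedge (ψ e)
      rw [hφψ e] at h2
      rw [h2]
      exact he
    · intro e _; exact hψφ e
    · intro e _; exact hφψ e
  have hconn : ∀ e e' : Ed,
      Relation.ReflTransGen (fun x y => ∃ ε, src ε = x ∧ dst ε = y) (dst e) (src e') := by
    intro e e'
    set K := (d - 1) + ((e'.1 - e.1 - 1 - ((d - 1 : ℕ) : ZMod M)) : ZMod M).val with hK
    set W : ℕ → Fin a := fun t =>
      if h : t + 1 < d then e.2 ⟨t + 1, h⟩
      else if h2 : K ≤ t ∧ t - K + 1 < d then e'.2 ⟨t - K, by omega⟩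
      else ⟨0, by omega⟩ with hW
    set f : ℕ → Ed := fun i => ((e.1 + 1 + (i : ℕ) : ZMod M), fun j : Fin d => W (i + j.1))
      with hf
    have hKd : d - 1 ≤ K := by rw [hK]; omega
    have hstart : dst e = src (f 0) := by
      refine Prod.ext (by simp [hdst, hsrc, hf]) (funext fun j => ?_)
      simp only [hdst, hsrc, hf]
      by_cases h : j + 1 < d
      · rw [dif_pos h, dif_pos h]
        show e.2 ⟨j + 1, h⟩ = W (0 + j)
        simp only [hW, Nat.zero_add]
        rw [dif_pos h]
      · rw [dif_neg h, dif_neg h]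
    have hcompat : ∀ i, dst (f i) = src (f (i + 1)) := by
      intro i
      refine Prod.ext (by simp [hdst, hsrc, hf]; push_cast; ring) (funext fun j => ?_)
      simp only [hdst, hsrc, hf]
      by_cases h : j + 1 < d
      · rw [dif_pos h, dif_pos h]
        show W (i + (j + 1)) = W (i + 1 + j)
        congr 1
        omega
      · rw [dif_neg h, dif_neg h]
    have hend : src (f K) = src e' := by
      refine Prod.ext ?_ (funext fun j => ?_)
      · show (f K).1 = e'.1
        simp only [hf]
        show e.1 + 1 + ((K : ℕ) : ZMod M) = e'.1
        rw [hK]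
        push_cast
        rw [ZMod.natCast_val, ZMod.cast_id]
        ring
      · simp only [hsrc, hf]
        by_cases h : j + 1 < d
        · rw [dif_pos h, dif_pos h]
          show W (K + j) = e'.2 ⟨j, by omega⟩
          simp only [hW]
          have hg1 : ¬ (K + j + 1 < d) := by omega
          rw [dif_neg hg1]
          have hg2 : K ≤ K + j ∧ K + j - K + 1 < d := ⟨by omega, by omega⟩
          rw [dif_pos hg2]
          refine congrArg e'.2 (Fin.ext ?_)
          show K + j - K = j
          omega
        · rw [dif_neg h, dif_neg h]
    have walk : ∀ i : ℕ, Relation.ReflTransGen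
        (fun x y => ∃ ε, src ε = x ∧ dst ε = y) (dst e) (src (f i)) := by
      intro i
      induction i with
      | zero => rw [← hstart]
      | succ i ih => exact ih.tail ⟨f i, rfl, hcompat i⟩
    have hw := walk K
    rwa [hend] at hw
  obtain ⟨σ, hper, hinj, hcompat⟩ := euler_circuit src dst hbal hconn
  have hcard : Fintype.card Ed = M * a ^ d := by
    show Fintype.card (ZMod M × (Fin d → Fin a)) = M * a ^ d
    rw [Fintype.card_prod, ZMod.card, Fintype.card_fun, Fintype.card_fin, Fintype.card_fin]
  set F : ℕ → Fin a := fun t => (σ t).2 ⟨0, by omega⟩ with hF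
  have hfst : ∀ t : ℕ, (σ t).1 = (σ 0).1 + (t : ZMod M) := by
    intro t
    induction t with
    | zero => simp
    | succ t ih =>
      have h1 : (dst (σ t)).1 = (src (σ (t + 1))).1 := congrArg Prod.fst (hcompat t)
      simp only [hdst, hsrc] at h1
      rw [← h1, ih]
      push_cast
      ring
  have hwin : ∀ j, ∀ (hj : j < d), ∀ t : ℕ, (σ t).2 ⟨j, hj⟩ = F (t + j) := by
    intro j
    induction j with
    | zero => intro hj t; simp only [hF, Nat.add_zero]
    | succ j ih =>
      intro hj t
      have hc := congrFun (congrArg Prod.snd (hcompat t)) j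
      simp only [hdst, hsrc] at hc
      rw [dif_pos hj, dif_pos hj] at hc
      have hgoal : (σ (t + 1)).2 ⟨j, by omega⟩ = F (t + (j + 1)) := by
        rw [ih (by omega) (t + 1)]
        congr 1
        omega
      exact hc.trans hgoal
  refine ⟨F, ?_, ?_⟩
  · intro t
    have h1 : t + M * a ^ d = t + Fintype.card Ed := by rw [hcard]
    simp only [hF]
    rw [h1, hper t]
  · intro c k k' hk hk' hwins
    have hσeq : σ (c + k * M) = σ (c + k' * M) := by
      refine Prod.ext ?_ ?_
      · rw [hfst (c + k * M), hfst (c + k' * M)]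
        congr 1
        push_cast
        simp [ZMod.natCast_self]
      · funext r
        exact ((hwin r.1 r.isLt _).trans (hwins r.1 r.isLt)).trans (hwin r.1 r.isLt _).symm
    have hmod := hinj _ _ hσeq
    rw [hcard] at hmod
    have key : ∀ x y, x ≤ y → y < a ^ d →
        (c + x * M) % (M * a ^ d) = (c + y * M) % (M * a ^ d) → x = y := by
      intro x y hle hy hm
      have hdvd : (M * a ^ d) ∣ (c + y * M) - (c + x * M) :=
        (Nat.modEq_iff_dvd' (by
          have := Nat.mul_le_mul_right M hle
          omega)).1 hm
      have heq2 : (c + y * M) - (c + x * M) = (y - x) * M := by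
        have := Nat.sub_mul y x M
        omega
      rw [heq2] at hdvd
      have hlt : (y - x) * M < M * a ^ d := by
        have h5 : y - x < a ^ d := by omega
        calc (y - x) * M < a ^ d * M := by
              exact Nat.mul_lt_mul_of_pos_right h5 (by omega)
          _ = M * a ^ d := by ring
      have hz := Nat.eq_zero_of_dvd_of_lt hdvd hlt
      have := Nat.mul_eq_zero.1 hz
      omega
    rcases le_total k k' with h | h
    · exact key k k' h hk' hmod
    · exact (key k' k h hk hmod.symm).symm

end CP

section Assembly

/-- Number of diamonds of `u` among positions `i, i+1, ..., i+ℓ-1`. -/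
def Din (a : ℕ) (u : ℕ → Option (Fin a)) (i ℓ : ℕ) : ℕ :=
  ∑ j ∈ Finset.range ℓ, if u (i + j) = none then 1 else 0

lemma Din_succ (a : ℕ) (u : ℕ → Option (Fin a)) (i ℓ : ℕ) :
    Din a u i (ℓ + 1) = Din a u i ℓ + (if u (i + ℓ) = none then 1 else 0) :=
  Finset.sum_range_succ _ _

lemma Din_add (a : ℕ) (u : ℕ → Option (Fin a)) (i x : ℕ) :
    ∀ y, Din a u i (x + y) = Din a u i x + Din a u (i + x) y := by
  intro y
  induction y with
  | zero => simp [Din]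
  | succ y ih =>
    have h1 : x + (y + 1) = (x + y) + 1 := by omega
    rw [h1, Din_succ, ih, Din_succ]
    have h2 : i + (x + y) = i + x + y := by omega
    rw [h2]
    omega

lemma Din_slide (a : ℕ) (u : ℕ → Option (Fin a)) (i ℓ : ℕ) :
    Din a u i ℓ + (if u (i + ℓ) = none then 1 else 0)
      = (if u i = none then 1 else 0) + Din a u (i + 1) ℓ := by
  have h1 := Finset.sum_range_succ (fun j => if u (i + j) = none then 1 else 0) ℓ
  have h2 := Finset.sum_range_succ' (fun j => if u (i + j) = none then 1 else 0) ℓ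
  have h3 : ∑ j ∈ Finset.range ℓ, (if u (i + (j + 1)) = none then 1 else 0)
      = Din a u (i + 1) ℓ := by
    apply Finset.sum_congr rfl
    intro j _
    have h4 : i + (j + 1) = i + 1 + j := by omega
    rw [h4]
  simp only [Nat.add_zero] at h2
  simp only [Din] at *
  omega

end Assembly


/-- Every upcycle lifts to a De Bruijn cycle: if `u` is an upcycle for `(Fin a)^n` with
diamondicity `d` (length `a^(n-d)`), then there is a De Bruijn cycle `w` for
`(Fin a)^n` covered by the concatenation `u^(a^d)` (as periodic functions: at each
position `u` is a diamond or agrees with `w`). -/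
theorem upcycle_lifts_to_deBruijn (a n d : ℕ) (ha : 2 ≤ a) (hn : 0 < n) (hd : d ≤ n)
    (u : ℕ → Option (Fin a))
    (hu : IsUpcycle a n (a ^ (n - d)) u)
    (hdiam : ∀ i, ((Finset.range n).filter (fun j => u (i + j) = none)).card = d) :
    ∃ w : ℕ → Fin a, IsDeBruijn a n w ∧ ∀ i, u i = none ∨ u i = some (w i) := by
  classical
  obtain ⟨hu1, hu2⟩ := hu
  rcases Nat.eq_zero_or_pos d with hd0 | hd1
  · -- no diamonds: u is itself a De Bruijn cycle
    subst hd0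
    have hN : a ^ (n - 0) = a ^ n := by norm_num
    have hno : ∀ i, u i ≠ none := by
      intro i hnone
      have h0 := hdiam i
      have hmem : 0 ∈ (Finset.range n).filter (fun j => u (i + j) = none) :=
        Finset.mem_filter.2 ⟨Finset.mem_range.2 hn, by simpa using hnone⟩
      rw [Finset.card_eq_zero.1 h0] at hmem
      exact absurd hmem (Finset.notMem_empty 0)
    set w : ℕ → Fin a := fun t => (u t).getD ⟨0, by omega⟩ with hw
    have hsome : ∀ t, u t = some (w t) := by
      intro t
      rcases h : u t with _ | c
      · exact absurd h (hno t)
      · simp [hw, h]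
    refine ⟨w, ⟨?_, ?_⟩, fun i => Or.inr (hsome i)⟩
    · intro i
      rw [hw]
      simp only
      rw [show i + a ^ n = i + a ^ (n - 0) by norm_num, hu1]
    · intro x
      obtain ⟨i₀, hcov, huniq⟩ := hu2 x
      refine ⟨i₀, ?_, ?_⟩
      · intro m
        rcases hcov m with hnone | hsm
        · exact absurd hnone (hno _)
        · have := hsome (i₀.1 + m.1)
          rw [hsm] at this
          exact (Option.some_inj.1 this).symm
      · intro y hy
        apply huniq
        intro j
        right
        rw [hsome (y.1 + j.1), hy j]
  · -- d ≥ 1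
    set N := a ^ (n - d) with hNdef
    have hN : 0 < N := pow_pos (by omega) _
    have hNa : N * a ^ d = a ^ n := by
      rw [hNdef, ← pow_add, Nat.sub_add_cancel hd]
    have hdiam' : ∀ i, Din a u i n = d := by
      intro i
      rw [← hdiam i]
      exact (Finset.card_filter _ _).symm
    have u_mul : ∀ (k i : ℕ), u (i + N * k) = u i := by
      intro k
      induction k with
      | zero => simp
      | succ k ih =>
        intro i
        have h1 : i + N * (k + 1) = (i + N * k) + N := by ring
        rw [h1, hu1, ih]
    have u_mod : ∀ t, u t = u (t % N) := by
      intro t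
      conv_lhs => rw [← Nat.mod_add_div t N]
      exact u_mul (t / N) (t % N)
    have DinN : ∀ i, Din a u i N = Din a u 0 N := by
      intro i
      induction i with
      | zero => rfl
      | succ i ih =>
        have hs := Din_slide a u i N
        rw [hu1 i] at hs
        rcases h : u i with _ | c <;> rw [h] at hs <;> simp at hs <;> omega
    set M := Din a u 0 N with hMdef
    have hM1 : 1 ≤ M := by
      by_contra hcon
      -- then u has no diamonds at all, contradicting d ≥ 1
      have hnone_all : ∀ t, u t ≠ none := by
        intro t ht
        have h1 : u (t % N) = none := by rw [← u_mod]; exact ht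
        have hle : (if u (0 + t % N) = none then 1 else 0) ≤ Din a u 0 N :=
          Finset.single_le_sum (f := fun j => if u (0 + j) = none then 1 else 0)
            (fun i _ => Nat.zero_le _) (Finset.mem_range.2 (Nat.mod_lt t hN))
        simp only [Nat.zero_add] at hle
        rw [h1] at hle
        simp only [if_pos rfl] at hle
        rw [← hMdef] at hle
        exact hcon hle
      have hzero : Din a u 0 n = 0 := by
        apply Finset.sum_eq_zero
        intro j hj
        simp [hnone_all j]
      rw [hdiam' 0] at hzero
      omega
    have cD_add : ∀ i ℓ, Din a u 0 (i + ℓ) = Din a u 0 i + Din a u i ℓ := by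
      intro i ℓ
      have := Din_add a u 0 i ℓ
      simpa using this
    have cD_mul : ∀ (k t : ℕ), Din a u 0 (t + N * k) = Din a u 0 t + M * k := by
      intro k
      induction k with
      | zero => simp
      | succ k ih =>
        intro t
        have h1 : t + N * (k + 1) = (t + N * k) + N := by ring
        rw [h1, cD_add, ih, DinN]
        ring
    have hval : ∀ i j, j < n → u (i + j) = none → Din a u i j + 1 ≤ d := by
      intro i j hj hnone
      have h1 : Din a u i n = Din a u i (j + 1) + Din a u (i + (j + 1)) (n - (j + 1)) := by
        rw [← Din_add]
        congr 1
        omega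
      have h2 : Din a u i (j + 1) = Din a u i j + 1 := by
        rw [Din_succ, hnone]
        simp
      rw [hdiam' i] at h1
      omega
    have hstrict : ∀ i j j', j < j' → u (i + j) = none →
        Din a u i j + 1 ≤ Din a u i j' := by
      intro i j j' hlt hnone
      have h1 : Din a u i j' = Din a u i (j + 1) + Din a u (i + (j + 1)) (j' - (j + 1)) := by
        rw [← Din_add]
        congr 1
        omega
      have h2 : Din a u i (j + 1) = Din a u i j + 1 := by
        rw [Din_succ, hnone]
        simp
      omega
    have hsurj : ∀ i r, r < d → ∃ j, j < n ∧ u (i + j) = none ∧ Din a u i j = r := by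
      intro i r hr
      set Δ := (Finset.range n).filter (fun j => u (i + j) = none) with hΔ
      have hcard : Δ.card = d := hdiam i
      have hinj : Set.InjOn (fun j => Din a u i j) Δ := by
        intro x hx y hy hxy
        simp only [hΔ, Finset.coe_filter, Set.mem_setOf_eq, Finset.mem_range] at hx hy
        have hxy' : Din a u i x = Din a u i y := hxy
        by_contra hne
        rcases Nat.lt_or_ge x y with h1 | h1
        · have := hstrict i x y h1 hx.2
          omega
        · have h2 : y < x := by omega
          have := hstrict i y x h2 hy.2
          omega
      have himg : Δ.image (fun j => Din a u i j) = Finset.range d := by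
        apply Finset.eq_of_subset_of_card_le
        · intro z hz
          obtain ⟨j, hj, rfl⟩ := Finset.mem_image.1 hz
          simp only [hΔ, Finset.mem_filter, Finset.mem_range] at hj
          have := hval i j hj.1 hj.2
          exact Finset.mem_range.2 (by omega)
        · rw [Finset.card_range, Finset.card_image_of_injOn hinj, hcard]
      have hmem : r ∈ Δ.image (fun j => Din a u i j) := by
        rw [himg]
        exact Finset.mem_range.2 hr
      obtain ⟨j, hj, hψ⟩ := Finset.mem_image.1 hmem
      simp only [hΔ, Finset.mem_filter, Finset.mem_range] at hj
      exact ⟨j, hj.1, hj.2, hψ⟩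
    obtain ⟨F, hFper, hFinj⟩ := cp_exists a d M (by omega) hd1 hM1
    set w : ℕ → Fin a := fun t => (u t).getD (F (Din a u 0 t)) with hw
    have hw_some : ∀ t c, u t = some c → w t = c := by
      intro t c h
      simp [hw, h]
    have hw_none : ∀ t, u t = none → w t = F (Din a u 0 t) := by
      intro t h
      simp [hw, h]
    refine ⟨w, ⟨?_, ?_⟩, ?_⟩
    · -- periodicity
      intro t
      have h1 : t + a ^ n = t + N * a ^ d := by rw [hNa]
      have h2 : u (t + N * a ^ d) = u t := u_mul _ t
      have h3 : Din a u 0 (t + N * a ^ d) = Din a u 0 t + M * a ^ d := cD_mul _ t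
      rw [h1]
      rcases h : u t with _ | c
      · rw [hw_none _ (by rw [h2]; exact h), hw_none _ h, h3, hFper]
      · rw [hw_some _ c (by rw [h2]; exact h), hw_some _ c h]
    · -- existence and uniqueness of each window
      intro x
      obtain ⟨i₀, hcov, huniq⟩ := hu2 x
      set c0 := Din a u 0 i₀.1 with hc0
      have hchoice : ∀ r : Fin d, ∃ j, j < n ∧ u (i₀.1 + j) = none ∧ Din a u i₀.1 j = r.1 :=
        fun r => hsurj i₀.1 r.1 r.2
      choose jfun hjlt hjnone hjval using hchoice
      set v : Fin d → Fin a := fun r => x ⟨jfun r, hjlt r⟩ with hv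
      have hbij : Function.Bijective
          (fun k : Fin (a ^ d) => (fun r : Fin d => F (c0 + k.1 * M + r.1))) := by
        rw [Fintype.bijective_iff_injective_and_card]
        constructor
        · intro k k' hkk
          apply Fin.ext
          refine hFinj c0 k.1 k'.1 k.2 k'.2 ?_
          intro r hr
          exact congrFun hkk ⟨r, hr⟩
        · simp [Fintype.card_fun]
      obtain ⟨k, hk⟩ := hbij.2 v
      have hilt : i₀.1 + N * k.1 < a ^ n := by
        have hi2 := i₀.2
        have hk2 := k.2
        calc i₀.1 + N * k.1 < N + N * k.1 := by omega
          _ = N * (k.1 + 1) := by ring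
          _ ≤ N * a ^ d := Nat.mul_le_mul_left N (by omega)
          _ = a ^ n := hNa
      have hwval : ∀ (κ : ℕ), ∀ m : Fin n, u (i₀.1 + m.1) = none →
          w (i₀.1 + N * κ + m.1) = F (c0 + κ * M + Din a u i₀.1 m.1) := by
        intro κ m hnone
        have h1 : i₀.1 + N * κ + m.1 = (i₀.1 + m.1) + N * κ := by ring
        have h2 : u (i₀.1 + N * κ + m.1) = none := by
          rw [h1, u_mul]
          exact hnone
        rw [hw_none _ h2]
        congr 1
        rw [h1, cD_mul, cD_add]
        ring
      have hwsome : ∀ (κ : ℕ), ∀ m : Fin n, ∀ cc, u (i₀.1 + m.1) = some cc →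
          w (i₀.1 + N * κ + m.1) = cc := by
        intro κ m cc hsome
        have h1 : i₀.1 + N * κ + m.1 = (i₀.1 + m.1) + N * κ := by ring
        apply hw_some
        rw [h1, u_mul]
        exact hsome
      refine ⟨⟨i₀.1 + N * k.1, hilt⟩, ?_, ?_⟩
      · -- the window at the chosen position spells x
        intro m
        show w (i₀.1 + N * k.1 + m.1) = x m
        rcases hcov m with hnone | hsm
        · rw [hwval k.1 m hnone]
          have hr : Din a u i₀.1 m.1 < d := by
            have := hval i₀.1 m.1 m.2 hnone
            omega
          have hFv : F (c0 + k.1 * M + Din a u i₀.1 m.1) = v ⟨Din a u i₀.1 m.1, hr⟩ :=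
            congrFun hk ⟨Din a u i₀.1 m.1, hr⟩
          rw [hFv, hv]
          have hj : jfun ⟨Din a u i₀.1 m.1, hr⟩ = m.1 := by
            have hjv : Din a u i₀.1 (jfun ⟨Din a u i₀.1 m.1, hr⟩) = Din a u i₀.1 m.1 :=
              hjval _
            by_contra hne
            rcases Nat.lt_or_ge (jfun ⟨Din a u i₀.1 m.1, hr⟩) m.1 with hlt | hge
            · have := hstrict i₀.1 _ _ hlt (hjnone ⟨Din a u i₀.1 m.1, hr⟩)
              omega
            · have hgt : m.1 < jfun ⟨Din a u i₀.1 m.1, hr⟩ := by omega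
              have := hstrict i₀.1 _ _ hgt hnone
              omega
          exact congrArg x (Fin.ext hj)
        · exact hwsome k.1 m (x m) hsm
      · -- uniqueness
        rintro y hy
        have hcovy : Covers a n u (y.1 % N) x := by
          intro j
          have huj : u (y.1 % N + j.1) = u (y.1 + j.1) := by
            have hsplit : y.1 % N + N * (y.1 / N) = y.1 := Nat.mod_add_div _ _
            conv_rhs => rw [show y.1 + j.1 = (y.1 % N + j.1) + N * (y.1 / N) by omega]
            rw [u_mul]
          rcases h : u (y.1 + j.1) with _ | cc
          · left
            rw [huj, h]
          · right
            rw [huj, h]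
            have h5 := hw_some _ _ h
            rw [hy j] at h5
            rw [h5]
        have hy0 : (⟨y.1 % N, Nat.mod_lt _ hN⟩ : Fin N) = i₀ := huniq _ hcovy
        have hymod : y.1 % N = i₀.1 := congrArg Fin.val hy0
        have hκlt : y.1 / N < a ^ d := by
          have hy2 : y.1 < N * a ^ d := by rw [hNa]; exact y.2
          exact (Nat.div_lt_iff_lt_mul hN).2 (by rw [mul_comm]; exact hy2)
        have hyeq : y.1 = i₀.1 + N * (y.1 / N) := by
          have hsplit : y.1 % N + N * (y.1 / N) = y.1 := Nat.mod_add_div _ _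
          omega
        have hFwin : ∀ r : Fin d, F (c0 + (y.1 / N) * M + r.1) = v r := by
          intro r
          have h1 := hwval (y.1 / N) ⟨jfun r, hjlt r⟩ (hjnone r)
          rw [hjval r] at h1
          have h3 := hy ⟨jfun r, hjlt r⟩
          rw [hyeq] at h3
          exact h1.symm.trans h3
        have hκeq : (⟨y.1 / N, hκlt⟩ : Fin (a ^ d)) = k := by
          apply hbij.1
          funext r
          exact (hFwin r).trans (congrFun hk r).symm
        apply Fin.ext
        show y.1 = i₀.1 + N * k.1
        rw [hyeq]
        congr 2
        exact congrArg Fin.val hκeq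
    · -- covering
      intro i
      rcases h : u i with _ | cc
      · left; rfl
      · right; rw [hw_some i cc h]
end
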